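/- arXiv:0810.0693 — 5 statements merged into one kernel-verified Lean document; each statement's English description precedes it below -/
import Mathlib

section
/- Let G = (Q, A, R, π) be a nonadaptive-query single-prover r-round game and let G' be the two-prover one-round game obtained by oracularizing G. Then every no-signaling strategy of G' has winning probability at most 1 − (1 − w(G))/(3r); in other words, the no-signaling value satisfies w_ns(G') ≤ 1 − (1 − w(G))/(3r). -/
attribute [local instance] Classical.propDecidable

noncomputable section

/-- The length-`k` prefix of a tuple indexed by `Fin r` (with junk values in positions `≥ r`,
which are never used when `k ≤ r`). -/
def pref {X : Type*} [Nonempty X] {r : ℕ} (x : Fin r → X) (k : ℕ) : Fin k → X :=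
  fun i => if h : (i : ℕ) < r then x ⟨i, h⟩ else Classical.arbitrary X

/-- `σ` is a (randomized) strategy of the prover in a nonadaptive-query single-prover
`r`-round game: `σ j qs as` is the probability distribution of the answer in round `j+1`,
given the questions `qs` of the first `j+1` rounds and the answers `as` of the first
`j` rounds. -/
def IsSeqStrategy {Q A : Type*} [Fintype A] (r : ℕ)
    (σ : (j : ℕ) → (Fin (j + 1) → Q) → (Fin j → A) → A → ℝ) : Prop :=
  ∀ j, j < r → ∀ (qs : Fin (j + 1) → Q) (as : Fin j → A),
    (∀ a, 0 ≤ σ j qs as a) ∧ (∑ a, σ j qs as a) = 1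

/-- The probability `θ(a₁,…,a_r | q₁,…,q_r)` induced by a single-prover strategy. -/
def seqJoint {Q A : Type*} [Fintype A] [Nonempty Q] [Nonempty A] (r : ℕ)
    (σ : (j : ℕ) → (Fin (j + 1) → Q) → (Fin j → A) → A → ℝ)
    (q : Fin r → Q) (a : Fin r → A) : ℝ :=
  ∏ j : Fin r, σ j.1 (pref q (j.1 + 1)) (pref a j.1) (a j)

/-- The winning probability of a single-prover strategy in the game `(Q, A, R, π)`. -/
def seqWinProb {Q A : Type*} [Fintype Q] [Fintype A] [Nonempty Q] [Nonempty A] (r : ℕ)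
    (π : (Fin r → Q) → ℝ) (R : (Fin r → Q) → (Fin r → A) → Bool)
    (σ : (j : ℕ) → (Fin (j + 1) → Q) → (Fin j → A) → A → ℝ) : ℝ :=
  ∑ q, π q * ∑ a, seqJoint r σ q a * (if R q a then 1 else 0)

/-- The value `w(G)` of the nonadaptive-query single-prover `r`-round game `G = (Q, A, R, π)`:
the supremum of winning probabilities over all strategies of the prover. -/
def seqGameValue {Q A : Type*} [Fintype Q] [Fintype A] [Nonempty Q] [Nonempty A] (r : ℕ)
    (π : (Fin r → Q) → ℝ) (R : (Fin r → Q) → (Fin r → A) → Bool) : ℝ :=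
  sSup {w : ℝ | ∃ σ, IsSeqStrategy r σ ∧ w = seqWinProb r π R σ}

/-- The first `k` coordinates of `a : Fin r → A` coincide with `a' : Fin k → A`
(trivially true beyond position `r`; for `k ≤ r` this is exactly prefix agreement). -/
def consistentPrefix {A : Type*} (r k : ℕ) (a : Fin r → A) (a' : Fin k → A) : Prop :=
  ∀ i : Fin k, ∀ h : (i : ℕ) < r, a ⟨i, h⟩ = a' i

/-- `θ'` is a no-signaling strategy of the oracularization `G'` of `G`: for each question
`q ∈ Q^r` to the first prover and each round cutoff `k ∈ {1,…,r}`, `θ' q k` is a probability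
distribution on `A^r × A^k`, the marginal on `A^r` does not depend on `k`, and the marginal on
`A^k` depends only on the length-`k` prefix of `q`. -/
def IsNoSignalingStrategy {Q A : Type*} [Fintype Q] [Fintype A] [Nonempty Q] [Nonempty A]
    (r : ℕ)
    (θ' : (Fin r → Q) → (k : ℕ) → (Fin r → A) → (Fin k → A) → ℝ) : Prop :=
  (∀ q k, 1 ≤ k → k ≤ r → ∀ a a', 0 ≤ θ' q k a a') ∧
  (∀ q k, 1 ≤ k → k ≤ r → (∑ a : Fin r → A, ∑ a' : Fin k → A, θ' q k a a') = 1) ∧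
  (∀ q k k', 1 ≤ k → k ≤ r → 1 ≤ k' → k' ≤ r → ∀ a : Fin r → A,
    (∑ a' : Fin k → A, θ' q k a a') = ∑ a' : Fin k' → A, θ' q k' a a') ∧
  (∀ q q' k, 1 ≤ k → k ≤ r → pref q k = pref q' k →
    ∀ a' : Fin k → A, (∑ a : Fin r → A, θ' q k a a') = ∑ a : Fin r → A, θ' q' k a a')

/-- The winning probability of a strategy `θ'` in the oracularized game `G'`: the verifier
draws `q ∼ π` and `k ∈ {1,…,r}` uniformly, sends `q` to prover 1 and `q_{[1,k]}` to prover 2,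
and accepts iff `R(a | q)` holds (Simulation Test) and `a_{[1,k]} = a'` (Consistency Test). -/
def oracWinProb {Q A : Type*} [Fintype Q] [Fintype A] [Nonempty Q] [Nonempty A] (r : ℕ)
    (π : (Fin r → Q) → ℝ) (R : (Fin r → Q) → (Fin r → A) → Bool)
    (θ' : (Fin r → Q) → (k : ℕ) → (Fin r → A) → (Fin k → A) → ℝ) : ℝ :=
  (1 / (r : ℝ)) * ∑ k ∈ Finset.Icc 1 r, ∑ q, π q *
    ∑ a : Fin r → A, ∑ a' : Fin k → A,
      θ' q k a a' * (if R q a = true ∧ consistentPrefix r k a a' then 1 else 0)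

namespace OracAux

lemma pref_apply {X : Type*} [Nonempty X] {r : ℕ} (x : Fin r → X) {k : ℕ} (i : Fin k)
    (h : (i : ℕ) < r) : pref x k i = x ⟨i, h⟩ := dif_pos h

lemma pref_self {X : Type*} [Nonempty X] {r : ℕ} (x : Fin r → X) : pref x r = x := by
  funext i
  rw [pref_apply x i i.2]

lemma pref_snoc_le {A : Type*} [Nonempty A] {k m : ℕ} (hm : m ≤ k) (as : Fin k → A) (a : A) :
    pref (Fin.snoc as a : Fin (k + 1) → A) m = pref as m := by
  funext i
  have h1 : (i : ℕ) < k := lt_of_lt_of_le i.2 hm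
  have h2 : (i : ℕ) < k + 1 := Nat.lt_succ_of_lt h1
  rw [pref_apply _ i h2, pref_apply _ i h1]
  exact @Fin.snoc_castSucc k (fun _ => A) a as ⟨(i : ℕ), h1⟩

lemma pref_snoc_self {A : Type*} [Nonempty A] {k : ℕ} (as : Fin k → A) (a : A) :
    pref (Fin.snoc as a : Fin (k + 1) → A) k = as := by
  funext i
  rw [pref_apply _ i (Nat.lt_succ_of_lt i.2)]
  have : (⟨(i : ℕ), Nat.lt_succ_of_lt i.2⟩ : Fin (k + 1)) = Fin.castSucc i := rfl
  rw [this, Fin.snoc_castSucc]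

lemma pref_succ {A : Type*} [Nonempty A] {r k : ℕ} (hk : k < r) (a : Fin r → A) :
    pref a (k + 1) = Fin.snoc (pref a k) (a ⟨k, hk⟩) := by
  funext i
  induction i using Fin.lastCases with
  | last =>
      rw [Fin.snoc_last]
      exact pref_apply a _ hk
  | cast j =>
      have hj : (j : ℕ) < r := lt_of_lt_of_le j.2 hk.le
      rw [Fin.snoc_castSucc, pref_apply a j hj]
      have : pref a (k + 1) j.castSucc = a ⟨(j : ℕ), hj⟩ := pref_apply a j.castSucc hj
      rw [this]

lemma snoc_eq_snoc_iff {A : Type*} {k : ℕ} {x y : Fin k → A} {u v : A} :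
    (Fin.snoc x u : Fin (k + 1) → A) = Fin.snoc y v ↔ x = y ∧ u = v := by
  constructor
  · intro h
    constructor
    · funext i
      have := congrFun h (Fin.castSucc i)
      simpa using this
    · have := congrFun h (Fin.last k)
      simpa using this
  · rintro ⟨rfl, rfl⟩; rfl

lemma consistent_iff {A : Type*} [Nonempty A] {r k : ℕ} (hk : k ≤ r) (a : Fin r → A)
    (a' : Fin k → A) : consistentPrefix r k a a' ↔ pref a k = a' := by
  constructor
  · intro h
    funext i
    have hi : (i : ℕ) < r := lt_of_lt_of_le i.2 hk
    rw [pref_apply a i hi, h i hi]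
  · intro h i hi
    rw [← congrFun h i, pref_apply a i hi]

lemma sum_snoc {A : Type*} [Fintype A] {k : ℕ} (G : (Fin (k + 1) → A) → ℝ) :
    ∑ f, G f = ∑ as : Fin k → A, ∑ a : A, G (Fin.snoc as a) := by
  rw [← (Fin.snocEquiv (fun _ => A)).sum_comp G, Fintype.sum_prod_type]
  simp only [Fin.snocEquiv]
  rw [Finset.sum_comm]
  rfl

section Defs

variable {Q A : Type*} [Fintype Q] [Fintype A] [Nonempty Q] [Nonempty A]

variable (r : ℕ) (θ' : (Fin r → Q) → (k : ℕ) → (Fin r → A) → (Fin k → A) → ℝ)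

/-- Marginal of `θ' q k` on the second prover's answers. -/
def Mdist (k : ℕ) (q : Fin r → Q) (a' : Fin k → A) : ℝ := ∑ a, θ' q k a a'

/-- Marginal of `θ' q k` on the first prover's answers (taken at `k = r`). -/
def Pdist (q : Fin r → Q) (a : Fin r → A) : ℝ := ∑ a' : Fin r → A, θ' q r a a'

/-- Length-`k` marginal of `Pdist`. -/
def gdist (k : ℕ) (q : Fin r → Q) (a' : Fin k → A) : ℝ :=
  ∑ a, Pdist r θ' q a * (if pref a k = a' then 1 else 0)

/-- Probability of failing the consistency test at cutoff `k`. -/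
def cerr (k : ℕ) (q : Fin r → Q) : ℝ :=
  ∑ a, ∑ a' : Fin k → A, θ' q k a a' * (if pref a k = a' then 0 else 1)

/-- Extension of a partial question tuple by junk. -/
def qext (j : ℕ) (qs : Fin j → Q) : Fin r → Q :=
  fun i => if h : (i : ℕ) < j then qs ⟨i, h⟩ else Classical.arbitrary Q

lemma pref_qext {j : ℕ} (hj : j ≤ r) (qs : Fin j → Q) : pref (qext r j qs) j = qs := by
  funext i
  have h1 : (i : ℕ) < j := i.2
  rw [pref_apply _ i (lt_of_lt_of_le h1 hj)]
  exact dif_pos h1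

variable {r}

lemma Mdist_nonneg (hθ' : IsNoSignalingStrategy r θ') {k : ℕ} (h1 : 1 ≤ k) (h2 : k ≤ r)
    (q : Fin r → Q) (a' : Fin k → A) : 0 ≤ Mdist r θ' k q a' :=
  Finset.sum_nonneg fun a _ => hθ'.1 q k h1 h2 a a'

lemma Mdist_sum (hθ' : IsNoSignalingStrategy r θ') {k : ℕ} (h1 : 1 ≤ k) (h2 : k ≤ r)
    (q : Fin r → Q) : ∑ a' : Fin k → A, Mdist r θ' k q a' = 1 := by
  rw [show ∑ a' : Fin k → A, Mdist r θ' k q a' = ∑ a' : Fin k → A, ∑ a, θ' q k a a' from rfl,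
    Finset.sum_comm]
  exact hθ'.2.1 q k h1 h2

lemma Pdist_eq (hθ' : IsNoSignalingStrategy r θ') {k : ℕ} (h1 : 1 ≤ k) (h2 : k ≤ r)
    (q : Fin r → Q) (a : Fin r → A) : Pdist r θ' q a = ∑ a' : Fin k → A, θ' q k a a' :=
  hθ'.2.2.1 q r k (le_trans h1 h2) le_rfl h1 h2 a

lemma Pdist_nonneg (hθ' : IsNoSignalingStrategy r θ') (hr : 1 ≤ r)
    (q : Fin r → Q) (a : Fin r → A) : 0 ≤ Pdist r θ' q a :=
  Finset.sum_nonneg fun a' _ => hθ'.1 q r hr le_rfl a a'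

lemma Pdist_sum (hθ' : IsNoSignalingStrategy r θ') (hr : 1 ≤ r) (q : Fin r → Q) :
    ∑ a, Pdist r θ' q a = 1 := hθ'.2.1 q r hr le_rfl

lemma cerr_nonneg (hθ' : IsNoSignalingStrategy r θ') {k : ℕ} (h1 : 1 ≤ k) (h2 : k ≤ r)
    (q : Fin r → Q) : 0 ≤ cerr r θ' k q :=
  Finset.sum_nonneg fun a _ => Finset.sum_nonneg fun a' _ => by
    have := hθ'.1 q k h1 h2 a a'
    have : (0:ℝ) ≤ (if pref a k = a' then (0:ℝ) else 1) := by split <;> norm_num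
    positivity

lemma gdist_sum (hθ' : IsNoSignalingStrategy r θ') {k : ℕ} (h1 : 1 ≤ k) (h2 : k ≤ r)
    (q : Fin r → Q) : ∑ a' : Fin k → A, gdist r θ' k q a' = 1 := by
  rw [show ∑ a' : Fin k → A, gdist r θ' k q a'
      = ∑ a' : Fin k → A, ∑ a, Pdist r θ' q a * (if pref a k = a' then 1 else 0) from rfl,
    Finset.sum_comm]
  have : ∀ a ∈ (Finset.univ : Finset (Fin r → A)),
      ∑ a' : Fin k → A, Pdist r θ' q a * (if pref a k = a' then 1 else 0) = Pdist r θ' q a := by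
    intro a _
    rw [← Finset.mul_sum]
    simp
  rw [Finset.sum_congr rfl this]
  exact Pdist_sum θ' hθ' (le_trans h1 h2) q

lemma gdist_top (q : Fin r → Q) : gdist r θ' r q = Pdist r θ' q := by
  funext a'
  rw [gdist]
  simp only [pref_self]
  simp

lemma gdist_marg (hθ' : IsNoSignalingStrategy r θ') {k : ℕ} (h2 : k + 1 ≤ r)
    (q : Fin r → Q) (as : Fin k → A) :
    ∑ b, gdist r θ' (k + 1) q (Fin.snoc as b) = gdist r θ' k q as := by
  have hk : k < r := h2
  rw [show ∑ b, gdist r θ' (k + 1) q (Fin.snoc as b)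
      = ∑ b, ∑ a, Pdist r θ' q a * (if pref a (k + 1) = Fin.snoc as b then 1 else 0) from rfl,
    Finset.sum_comm, gdist]
  refine Finset.sum_congr rfl fun a _ => ?_
  rw [← Finset.mul_sum]
  congr 1
  have hcond : ∀ b : A, (pref a (k + 1) = Fin.snoc as b) ↔ (pref a k = as ∧ a ⟨k, hk⟩ = b) := by
    intro b; rw [pref_succ hk a, snoc_eq_snoc_iff]
  calc ∑ b, (if pref a (k + 1) = Fin.snoc as b then (1:ℝ) else 0)
      = ∑ b, (if pref a k = as ∧ a ⟨k, hk⟩ = b then (1:ℝ) else 0) :=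
        Finset.sum_congr rfl fun b _ => by rw [if_congr (hcond b) rfl rfl]
    _ = if pref a k = as then 1 else 0 := by
        by_cases h : pref a k = as
        · simp [h]
        · simp [h]

lemma Mg_bound (hθ' : IsNoSignalingStrategy r θ') {k : ℕ} (h1 : 1 ≤ k) (h2 : k ≤ r)
    (q : Fin r → Q) :
    ∑ a' : Fin k → A, |Mdist r θ' k q a' - gdist r θ' k q a'| ≤ 2 * cerr r θ' k q := by
  have hpos := hθ'.1
  have hnorm := hθ'.2.1
  set d : (Fin k → A) → ℝ := fun a' => ∑ a, θ' q k a a' * (if pref a k = a' then 1 else 0)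
    with hd
  have hdM : ∀ a', d a' ≤ Mdist r θ' k q a' := by
    intro a'
    refine Finset.sum_le_sum fun a _ => ?_
    have h0 := hpos q k h1 h2 a a'
    have hle : (if pref a k = a' then (1:ℝ) else 0) ≤ 1 := by split <;> norm_num
    calc θ' q k a a' * (if pref a k = a' then (1:ℝ) else 0) ≤ θ' q k a a' * 1 :=
          mul_le_mul_of_nonneg_left hle h0
      _ = θ' q k a a' := mul_one _
  have hdg : ∀ a', d a' ≤ gdist r θ' k q a' := by
    intro a'
    refine Finset.sum_le_sum fun a _ => ?_
    have hP : θ' q k a a' ≤ Pdist r θ' q a := by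
      rw [Pdist_eq θ' hθ' h1 h2 q a]
      exact Finset.single_le_sum (fun b _ => hpos q k h1 h2 a b) (Finset.mem_univ a')
    have hite : (0:ℝ) ≤ (if pref a k = a' then (1:ℝ) else 0) := by split <;> norm_num
    exact mul_le_mul_of_nonneg_right hP hite
  have hMsum := Mdist_sum θ' hθ' h1 h2 q
  have hgsum := gdist_sum θ' hθ' h1 h2 q
  have hdsum : (∑ a' : Fin k → A, d a') + cerr r θ' k q = 1 := by
    have e1 : ∑ a' : Fin k → A, d a'
        = ∑ a, ∑ a' : Fin k → A, θ' q k a a' * (if pref a k = a' then 1 else 0) :=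
      Finset.sum_comm
    rw [e1]
    unfold cerr
    rw [← Finset.sum_add_distrib]
    have hcongr : ∀ a ∈ (Finset.univ : Finset (Fin r → A)),
        ((∑ a' : Fin k → A, θ' q k a a' * (if pref a k = a' then 1 else 0)) +
          ∑ a' : Fin k → A, θ' q k a a' * (if pref a k = a' then 0 else 1))
        = ∑ a' : Fin k → A, θ' q k a a' := by
      intro a _
      rw [← Finset.sum_add_distrib]
      refine Finset.sum_congr rfl fun a' _ => ?_
      split <;> ring
    rw [Finset.sum_congr rfl hcongr]
    exact hnorm q k h1 h2
  calc ∑ a' : Fin k → A, |Mdist r θ' k q a' - gdist r θ' k q a'|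
      ≤ ∑ a' : Fin k → A, ((Mdist r θ' k q a' - d a') + (gdist r θ' k q a' - d a')) := by
        refine Finset.sum_le_sum fun a' _ => ?_
        have hM := hdM a'
        have hg := hdg a'
        rw [abs_le]
        constructor <;> linarith
    _ = ((∑ a' : Fin k → A, Mdist r θ' k q a') - ∑ a' : Fin k → A, d a')
        + ((∑ a' : Fin k → A, gdist r θ' k q a') - ∑ a' : Fin k → A, d a') := by
        rw [Finset.sum_add_distrib, Finset.sum_sub_distrib, Finset.sum_sub_distrib]
    _ ≤ 2 * cerr r θ' k q := by linarith

end Defs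

section Defs2
set_option linter.unusedSectionVars false
set_option linter.unusedVariables false

variable {Q A : Type*} [Fintype Q] [Fintype A] [Nonempty Q] [Nonempty A]

variable (r : ℕ) (θ' : (Fin r → Q) → (k : ℕ) → (Fin r → A) → (Fin k → A) → ℝ)

/-- The sequential strategy extracted from the no-signaling strategy `θ'`. -/
def sig (j : ℕ) (qs : Fin (j + 1) → Q) (as : Fin j → A) (a : A) : ℝ :=
  if 0 < ∑ b, Mdist r θ' (j + 1) (qext r (j + 1) qs) (Fin.snoc as b)
  then Mdist r θ' (j + 1) (qext r (j + 1) qs) (Fin.snoc as a) /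
    ∑ b, Mdist r θ' (j + 1) (qext r (j + 1) qs) (Fin.snoc as b)
  else (Fintype.card A : ℝ)⁻¹

/-- The partial joint distribution induced by a sequential strategy. -/
def T (σ : (j : ℕ) → (Fin (j + 1) → Q) → (Fin j → A) → A → ℝ)
    (k : ℕ) (q : Fin r → Q) (as : Fin k → A) : ℝ :=
  ∏ j : Fin k, σ j.1 (pref q (j.1 + 1)) (pref as j.1) (as j)

variable {r}
variable (σ : (j : ℕ) → (Fin (j + 1) → Q) → (Fin j → A) → A → ℝ)

lemma seqJoint_eq_T (q : Fin r → Q) : seqJoint r σ q = T r σ r q := rfl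

lemma T_snoc (k : ℕ) (q : Fin r → Q) (as : Fin k → A) (a : A) :
    T r σ (k + 1) q (Fin.snoc as a) = T r σ k q as * σ k (pref q (k + 1)) as a := by
  unfold T
  rw [Fin.prod_univ_castSucc]
  congr 1
  · refine Finset.prod_congr rfl fun j _ => ?_
    simp only [Fin.coe_castSucc, Fin.snoc_castSucc]
    rw [pref_snoc_le (le_of_lt j.2)]
  · simp only [Fin.val_last, Fin.snoc_last, pref_snoc_self]

lemma T_nonneg (hσ : IsSeqStrategy r σ) :
    ∀ k, k ≤ r → ∀ (q : Fin r → Q) (as : Fin k → A), 0 ≤ T r σ k q as := by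
  intro k
  induction k with
  | zero => intro _ q as; simp [T]
  | succ k ih =>
      intro hk q as
      rw [← Fin.snoc_init_self as, T_snoc]
      exact mul_nonneg (ih (Nat.le_of_succ_le hk) q _) ((hσ k hk _ _).1 _)

lemma T_sum (hσ : IsSeqStrategy r σ) :
    ∀ k, k ≤ r → ∀ q : Fin r → Q, ∑ as : Fin k → A, T r σ k q as = 1 := by
  intro k
  induction k with
  | zero => intro _ q; simp [T]
  | succ k ih =>
      intro hk q
      rw [sum_snoc (fun f => T r σ (k + 1) q f)]
      have hcongr : ∀ as ∈ (Finset.univ : Finset (Fin k → A)),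
          ∑ a, T r σ (k + 1) q (Fin.snoc as a) = T r σ k q as := by
        intro as _
        calc ∑ a, T r σ (k + 1) q (Fin.snoc as a)
            = ∑ a, T r σ k q as * σ k (pref q (k + 1)) as a :=
              Finset.sum_congr rfl fun a _ => T_snoc σ k q as a
          _ = T r σ k q as * ∑ a, σ k (pref q (k + 1)) as a := by rw [Finset.mul_sum]
          _ = T r σ k q as := by rw [(hσ k hk _ _).2, mul_one]
      rw [Finset.sum_congr rfl hcongr]
      exact ih (Nat.le_of_succ_le hk) q

lemma sig_strategy (hθ' : IsNoSignalingStrategy r θ') : IsSeqStrategy r (sig r θ') := by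
  intro j hj qs as
  have h1 : 1 ≤ j + 1 := Nat.succ_le_succ (Nat.zero_le j)
  have h2 : j + 1 ≤ r := hj
  have hcard : (0:ℝ) < Fintype.card A := by exact_mod_cast Fintype.card_pos
  constructor
  · intro a
    unfold sig
    split
    · next h => exact div_nonneg (Mdist_nonneg θ' hθ' h1 h2 _ _) (le_of_lt h)
    · next h => exact inv_nonneg.mpr (le_of_lt hcard)
  · unfold sig
    by_cases h : 0 < ∑ b, Mdist r θ' (j + 1) (qext r (j + 1) qs) (Fin.snoc as b)
    · simp only [if_pos h]
      rw [← Finset.sum_div, div_self (ne_of_gt h)]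
    · simp only [if_neg h]
      rw [Finset.sum_const, Finset.card_univ, nsmul_eq_mul, mul_inv_cancel₀ (ne_of_gt hcard)]

lemma sig_eq (hθ' : IsNoSignalingStrategy r θ') {k : ℕ} (h2 : k + 1 ≤ r) (q : Fin r → Q)
    (as : Fin k → A) (a : A) :
    sig r θ' k (pref q (k + 1)) as a =
      if 0 < ∑ b, Mdist r θ' (k + 1) q (Fin.snoc as b)
      then Mdist r θ' (k + 1) q (Fin.snoc as a) / ∑ b, Mdist r θ' (k + 1) q (Fin.snoc as b)
      else (Fintype.card A : ℝ)⁻¹ := by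
  have hM : ∀ a' : Fin (k + 1) → A,
      Mdist r θ' (k + 1) (qext r (k + 1) (pref q (k + 1))) a' = Mdist r θ' (k + 1) q a' := by
    intro a'
    exact hθ'.2.2.2 (qext r (k + 1) (pref q (k + 1))) q (k + 1)
      (Nat.succ_le_succ (Nat.zero_le k)) h2 (by rw [pref_qext r h2 (pref q (k + 1))]) a'
  unfold sig
  simp only [hM]

end Defs2

section Key
set_option maxHeartbeats 1000000
set_option linter.unusedSectionVars false
set_option linter.unusedVariables false

variable {Q A : Type*} [Fintype Q] [Fintype A] [Nonempty Q] [Nonempty A]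

variable {r : ℕ} (θ' : (Fin r → Q) → (k : ℕ) → (Fin r → A) → (Fin k → A) → ℝ)

lemma TM_inner (hθ' : IsNoSignalingStrategy r θ') {k : ℕ} (h2 : k + 1 ≤ r) (q : Fin r → Q)
    (as : Fin k → A) :
    ∑ a, |T r (sig r θ') (k + 1) q (Fin.snoc as a) - Mdist r θ' (k + 1) q (Fin.snoc as a)|
    = |T r (sig r θ') k q as - ∑ b, Mdist r θ' (k + 1) q (Fin.snoc as b)| := by
  have h1 : 1 ≤ k + 1 := Nat.succ_le_succ (Nat.zero_le k)
  have hTnn : 0 ≤ T r (sig r θ') k q as :=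
    T_nonneg (sig r θ') (sig_strategy θ' hθ') k (Nat.le_of_succ_le h2) q as
  have hMnn : ∀ b, 0 ≤ Mdist r θ' (k + 1) q (Fin.snoc as b) := fun b =>
    Mdist_nonneg θ' hθ' h1 h2 q _
  have hcard : (0:ℝ) < Fintype.card A := by exact_mod_cast Fintype.card_pos
  by_cases h : 0 < ∑ b, Mdist r θ' (k + 1) q (Fin.snoc as b)
  · have hper : ∀ a,
        |T r (sig r θ') (k + 1) q (Fin.snoc as a) - Mdist r θ' (k + 1) q (Fin.snoc as a)|
        = (Mdist r θ' (k + 1) q (Fin.snoc as a) / ∑ b, Mdist r θ' (k + 1) q (Fin.snoc as b)) *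
          |T r (sig r θ') k q as - ∑ b, Mdist r θ' (k + 1) q (Fin.snoc as b)| := by
      intro a
      rw [T_snoc, sig_eq θ' hθ' h2, if_pos h]
      rw [show T r (sig r θ') k q as *
            (Mdist r θ' (k + 1) q (Fin.snoc as a) / ∑ b, Mdist r θ' (k + 1) q (Fin.snoc as b))
            - Mdist r θ' (k + 1) q (Fin.snoc as a)
          = (Mdist r θ' (k + 1) q (Fin.snoc as a) / ∑ b, Mdist r θ' (k + 1) q (Fin.snoc as b)) *
            (T r (sig r θ') k q as - ∑ b, Mdist r θ' (k + 1) q (Fin.snoc as b)) from by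
        field_simp]
      rw [abs_mul, abs_of_nonneg (div_nonneg (hMnn a) (le_of_lt h))]
    rw [Finset.sum_congr rfl fun a _ => hper a, ← Finset.sum_mul, ← Finset.sum_div,
      div_self (ne_of_gt h), one_mul]
  · have hS0 : ∑ b, Mdist r θ' (k + 1) q (Fin.snoc as b) = 0 :=
      le_antisymm (not_lt.mp h) (Finset.sum_nonneg fun b _ => hMnn b)
    have hM0 : ∀ b, Mdist r θ' (k + 1) q (Fin.snoc as b) = 0 := fun b =>
      (Finset.sum_eq_zero_iff_of_nonneg (fun b _ => hMnn b)).mp hS0 b (Finset.mem_univ b)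
    have hper : ∀ a,
        |T r (sig r θ') (k + 1) q (Fin.snoc as a) - Mdist r θ' (k + 1) q (Fin.snoc as a)|
        = T r (sig r θ') k q as * (Fintype.card A : ℝ)⁻¹ := by
      intro a
      rw [T_snoc, sig_eq θ' hθ' h2, if_neg h, hM0 a, sub_zero,
        abs_of_nonneg (mul_nonneg hTnn (inv_nonneg.mpr (le_of_lt hcard)))]
    rw [Finset.sum_congr rfl fun a _ => hper a, Finset.sum_const, Finset.card_univ,
      nsmul_eq_mul, hS0, sub_zero, abs_of_nonneg hTnn]
    field_simp

lemma key_bound (hθ' : IsNoSignalingStrategy r θ') (q : Fin r → Q) :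
    ∀ k, 1 ≤ k → k ≤ r →
      ∑ a' : Fin k → A, |T r (sig r θ') k q a' - gdist r θ' k q a'|
        ≤ 4 * ∑ j ∈ Finset.Icc 1 k, cerr r θ' j q := by
  intro k hk1
  induction k, hk1 using Nat.le_induction with
  | base =>
      intro h1r
      have hT1 : ∀ a' : Fin 1 → A, T r (sig r θ') 1 q a' = Mdist r θ' 1 q a' := by
        intro a'
        rw [← Fin.snoc_init_self a', T_snoc]
        rw [show T r (sig r θ') 0 q (Fin.init a') = 1 from by simp [T], one_mul,
          sig_eq θ' hθ' h1r]
        have hee : ∀ b, (Fin.snoc (Fin.init a') b : Fin 1 → A) = fun _ => b := by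
          intro b; funext i
          have hi : i = Fin.last 0 := Fin.ext (by omega)
          rw [hi, Fin.snoc_last]
        have hsum1 : ∑ b, Mdist r θ' 1 q (Fin.snoc (Fin.init a') b) = 1 := by
          rw [Finset.sum_congr rfl fun b _ => by rw [hee b], ← Mdist_sum θ' hθ' le_rfl h1r q]
          exact Fintype.sum_equiv (Equiv.funUnique (Fin 1) A).symm _ _ (fun b => rfl)
        rw [hsum1, if_pos one_pos, div_one, Fin.snoc_init_self]
      rw [Finset.sum_congr rfl fun a' _ => by rw [hT1 a']]
      have hMg := Mg_bound θ' hθ' le_rfl h1r q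
      have hc := cerr_nonneg θ' hθ' le_rfl h1r q
      rw [Finset.Icc_self, Finset.sum_singleton]
      linarith
  | succ k hk1 IH =>
      intro hk1r
      have hkr : k ≤ r := Nat.le_of_succ_le hk1r
      have h1 : 1 ≤ k + 1 := Nat.succ_le_succ (Nat.zero_le k)
      have IH' := IH hkr
      have hMg := Mg_bound θ' hθ' h1 hk1r q
      have tri : ∑ a' : Fin (k + 1) → A, |T r (sig r θ') (k + 1) q a' - gdist r θ' (k + 1) q a'|
          ≤ (∑ a' : Fin (k + 1) → A, |T r (sig r θ') (k + 1) q a' - Mdist r θ' (k + 1) q a'|)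
            + ∑ a' : Fin (k + 1) → A, |Mdist r θ' (k + 1) q a' - gdist r θ' (k + 1) q a'| := by
        rw [← Finset.sum_add_distrib]
        exact Finset.sum_le_sum fun a' _ => abs_sub_le _ _ _
      have hTM : ∑ a' : Fin (k + 1) → A, |T r (sig r θ') (k + 1) q a' - Mdist r θ' (k + 1) q a'|
          = ∑ as : Fin k → A,
            |T r (sig r θ') k q as - ∑ b, Mdist r θ' (k + 1) q (Fin.snoc as b)| := by
        rw [sum_snoc]
        exact Finset.sum_congr rfl fun as _ => TM_inner θ' hθ' hk1r q as
      have tri2 : ∑ as : Fin k → A,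
            |T r (sig r θ') k q as - ∑ b, Mdist r θ' (k + 1) q (Fin.snoc as b)|
          ≤ (∑ as : Fin k → A, |T r (sig r θ') k q as - gdist r θ' k q as|)
            + ∑ as : Fin k → A,
              |gdist r θ' k q as - ∑ b, Mdist r θ' (k + 1) q (Fin.snoc as b)| := by
        rw [← Finset.sum_add_distrib]
        exact Finset.sum_le_sum fun as _ => abs_sub_le _ _ _
      have hgS : ∑ as : Fin k → A,
            |gdist r θ' k q as - ∑ b, Mdist r θ' (k + 1) q (Fin.snoc as b)|
          ≤ 2 * cerr r θ' (k + 1) q := by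
        calc ∑ as : Fin k → A,
              |gdist r θ' k q as - ∑ b, Mdist r θ' (k + 1) q (Fin.snoc as b)|
            = ∑ as : Fin k → A, |∑ b, (gdist r θ' (k + 1) q (Fin.snoc as b)
                - Mdist r θ' (k + 1) q (Fin.snoc as b))| := by
              refine Finset.sum_congr rfl fun as _ => ?_
              rw [Finset.sum_sub_distrib, gdist_marg θ' hθ' hk1r q as]
          _ ≤ ∑ as : Fin k → A, ∑ b, |gdist r θ' (k + 1) q (Fin.snoc as b)
                - Mdist r θ' (k + 1) q (Fin.snoc as b)| :=
              Finset.sum_le_sum fun as _ => Finset.abs_sum_le_sum_abs _ _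
          _ = ∑ a' : Fin (k + 1) → A, |gdist r θ' (k + 1) q a' - Mdist r θ' (k + 1) q a'| :=
              (sum_snoc (fun a' : Fin (k + 1) → A =>
                |gdist r θ' (k + 1) q a' - Mdist r θ' (k + 1) q a'|)).symm
          _ = ∑ a' : Fin (k + 1) → A, |Mdist r θ' (k + 1) q a' - gdist r θ' (k + 1) q a'| :=
              Finset.sum_congr rfl fun a' _ => abs_sub_comm _ _
          _ ≤ 2 * cerr r θ' (k + 1) q := hMg
      rw [Finset.sum_Icc_succ_top h1]
      linarith

end Key

section Assemble
set_option maxHeartbeats 1000000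
set_option linter.unusedSectionVars false
set_option linter.unusedVariables false

variable {Q A : Type*} [Fintype Q] [Fintype A] [Nonempty Q] [Nonempty A]

variable (r : ℕ) (π : (Fin r → Q) → ℝ) (R : (Fin r → Q) → (Fin r → A) → Bool)
  (θ' : (Fin r → Q) → (k : ℕ) → (Fin r → A) → (Fin k → A) → ℝ)

/-- Winning probability of the simulated strategy, conditioned on question `q`. -/
def TWin (q : Fin r → Q) : ℝ :=
  ∑ a, T r (sig r θ') r q a * (if R q a then (1:ℝ) else 0)

/-- Probability that the first prover's answers pass the simulation test, given `q`. -/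
def simWin (q : Fin r → Q) : ℝ :=
  ∑ a, Pdist r θ' q a * (if R q a then (1:ℝ) else 0)

/-- Acceptance probability of the oracularized game at cutoff `k`. -/
def accP (k : ℕ) : ℝ :=
  ∑ q, π q * ∑ a : Fin r → A, ∑ a' : Fin k → A,
    θ' q k a a' * (if R q a = true ∧ consistentPrefix r k a a' then 1 else 0)

/-- Average consistency error at cutoff `k`. -/
def cbar (k : ℕ) : ℝ := ∑ q, π q * cerr r θ' k q

lemma orac_eq : oracWinProb r π R θ' = (1 / (r : ℝ)) * ∑ k ∈ Finset.Icc 1 r, accP r π R θ' k :=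
  rfl

lemma seqWin_sig : seqWinProb r π R (sig r θ') = ∑ q, π q * TWin r R θ' q := rfl

variable {r}

lemma seqWinProb_le_one (hπ0 : ∀ q, 0 ≤ π q) (hπ1 : ∑ q, π q = 1)
    (σ : (j : ℕ) → (Fin (j + 1) → Q) → (Fin j → A) → A → ℝ) (hσ : IsSeqStrategy r σ) :
    seqWinProb r π R σ ≤ 1 := by
  rw [← hπ1]
  unfold seqWinProb
  refine Finset.sum_le_sum fun q _ => ?_
  have hinner : ∑ a, seqJoint r σ q a * (if R q a then (1:ℝ) else 0) ≤ 1 := by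
    calc ∑ a, seqJoint r σ q a * (if R q a then (1:ℝ) else 0)
        ≤ ∑ a, seqJoint r σ q a := by
          refine Finset.sum_le_sum fun a _ => ?_
          have h0 : 0 ≤ seqJoint r σ q a := by
            rw [seqJoint_eq_T]
            exact T_nonneg σ hσ r le_rfl q a
          split <;> simp [h0]
      _ = 1 := by
          rw [show (fun a => seqJoint r σ q a) = seqJoint r σ q from rfl, seqJoint_eq_T σ q]
          exact T_sum σ hσ r le_rfl q
  calc π q * ∑ a, seqJoint r σ q a * (if R q a then (1:ℝ) else 0)
      ≤ π q * 1 := mul_le_mul_of_nonneg_left hinner (hπ0 q)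
    _ = π q := mul_one _

lemma sig_le_value (hπ0 : ∀ q, 0 ≤ π q) (hπ1 : ∑ q, π q = 1)
    (hθ' : IsNoSignalingStrategy r θ') :
    seqWinProb r π R (sig r θ') ≤ seqGameValue r π R := by
  apply le_csSup
  · refine ⟨1, ?_⟩
    rintro w ⟨σ', hσ', rfl⟩
    exact seqWinProb_le_one π R hπ0 hπ1 σ' hσ'
  · exact ⟨sig r θ', sig_strategy θ' hθ', rfl⟩

lemma accP_add_cbar_le (hπ0 : ∀ q, 0 ≤ π q) (hπ1 : ∑ q, π q = 1)
    (hθ' : IsNoSignalingStrategy r θ') {k : ℕ} (h1 : 1 ≤ k) (h2 : k ≤ r) :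
    accP r π R θ' k + cbar r π θ' k ≤ 1 := by
  have hperq : ∀ q, (∑ a : Fin r → A, ∑ a' : Fin k → A,
      θ' q k a a' * (if R q a = true ∧ consistentPrefix r k a a' then (1:ℝ) else 0))
      + cerr r θ' k q ≤ 1 := by
    intro q
    have hstep : ∀ (a : Fin r → A) (a' : Fin k → A),
        θ' q k a a' * (if R q a = true ∧ consistentPrefix r k a a' then (1:ℝ) else 0)
        + θ' q k a a' * (if pref a k = a' then (0:ℝ) else 1) ≤ θ' q k a a' := by
      intro a a'
      have h0 := hθ'.1 q k h1 h2 a a'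
      by_cases hc : pref a k = a'
      · rw [if_pos hc, mul_zero, add_zero]
        by_cases hR : R q a = true ∧ consistentPrefix r k a a'
        · rw [if_pos hR, mul_one]
        · rw [if_neg hR, mul_zero]; exact h0
      · rw [if_neg hc, mul_one]
        have hnR : ¬(R q a = true ∧ consistentPrefix r k a a') := by
          rintro ⟨-, hcons⟩
          exact hc ((consistent_iff h2 a a').mp hcons)
        rw [if_neg hnR, mul_zero, zero_add]
    calc (∑ a : Fin r → A, ∑ a' : Fin k → A,
          θ' q k a a' * (if R q a = true ∧ consistentPrefix r k a a' then (1:ℝ) else 0))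
          + cerr r θ' k q
        = ∑ a : Fin r → A, ∑ a' : Fin k → A,
            (θ' q k a a' * (if R q a = true ∧ consistentPrefix r k a a' then (1:ℝ) else 0)
              + θ' q k a a' * (if pref a k = a' then (0:ℝ) else 1)) := by
          unfold cerr
          rw [← Finset.sum_add_distrib]
          exact Finset.sum_congr rfl fun a _ => (Finset.sum_add_distrib).symm
      _ ≤ ∑ a : Fin r → A, ∑ a' : Fin k → A, θ' q k a a' :=
          Finset.sum_le_sum fun a _ => Finset.sum_le_sum fun a' _ => hstep a a'
      _ = 1 := hθ'.2.1 q k h1 h2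
  calc accP r π R θ' k + cbar r π θ' k
      = ∑ q, π q * ((∑ a : Fin r → A, ∑ a' : Fin k → A,
          θ' q k a a' * (if R q a = true ∧ consistentPrefix r k a a' then (1:ℝ) else 0))
          + cerr r θ' k q) := by
        unfold accP cbar
        rw [← Finset.sum_add_distrib]
        exact Finset.sum_congr rfl fun q _ => (mul_add _ _ _).symm
    _ ≤ ∑ q, π q * 1 :=
        Finset.sum_le_sum fun q _ => mul_le_mul_of_nonneg_left (hperq q) (hπ0 q)
    _ = 1 := by simp [hπ1]

lemma cbar_nonneg (hπ0 : ∀ q, 0 ≤ π q) (hθ' : IsNoSignalingStrategy r θ') {k : ℕ}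
    (h1 : 1 ≤ k) (h2 : k ≤ r) : 0 ≤ cbar r π θ' k :=
  Finset.sum_nonneg fun q _ => mul_nonneg (hπ0 q) (cerr_nonneg θ' hθ' h1 h2 q)

lemma accP_one_le (hπ0 : ∀ q, 0 ≤ π q) (hθ' : IsNoSignalingStrategy r θ') (hr : 1 ≤ r) :
    accP r π R θ' 1 ≤ ∑ q, π q * simWin r R θ' q := by
  refine Finset.sum_le_sum fun q _ => mul_le_mul_of_nonneg_left ?_ (hπ0 q)
  refine Finset.sum_le_sum fun a _ => ?_
  calc ∑ a' : Fin 1 → A, θ' q 1 a a' * (if R q a = true ∧ consistentPrefix r 1 a a' then (1:ℝ) else 0)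
      ≤ ∑ a' : Fin 1 → A, θ' q 1 a a' * (if R q a then (1:ℝ) else 0) := by
        refine Finset.sum_le_sum fun a' _ => ?_
        have h0 := hθ'.1 q 1 le_rfl hr a a'
        by_cases hR : R q a
        · rw [if_pos hR]
          by_cases hC : R q a = true ∧ consistentPrefix r 1 a a'
          · rw [if_pos hC]
          · rw [if_neg hC, mul_zero, mul_one]; exact h0
        · have hnC : ¬(R q a = true ∧ consistentPrefix r 1 a a') := fun h => hR h.1
          rw [if_neg hnC, if_neg hR]
      _ = (∑ a' : Fin 1 → A, θ' q 1 a a') * (if R q a then (1:ℝ) else 0) :=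
        (Finset.sum_mul _ _ _).symm
      _ = Pdist r θ' q a * (if R q a then (1:ℝ) else 0) := by
        rw [← Pdist_eq θ' hθ' le_rfl hr q a]

lemma sim_minus_TWin (hθ' : IsNoSignalingStrategy r θ') (hr : 1 ≤ r) (q : Fin r → Q) :
    simWin r R θ' q - TWin r R θ' q ≤ 2 * ∑ k ∈ Finset.Icc 1 r, cerr r θ' k q := by
  have hsig := sig_strategy θ' hθ'
  have hE := key_bound θ' hθ' q r hr le_rfl
  rw [gdist_top] at hE
  have hT1 : ∑ a, T r (sig r θ') r q a = 1 := T_sum _ hsig r le_rfl q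
  have hP1 : ∑ a, Pdist r θ' q a = 1 := Pdist_sum θ' hθ' hr q
  have hpoint : ∀ a, (Pdist r θ' q a - T r (sig r θ') r q a) * (if R q a then (1:ℝ) else 0)
      ≤ (|T r (sig r θ') r q a - Pdist r θ' q a|
          + (Pdist r θ' q a - T r (sig r θ') r q a)) / 2 := by
    intro a
    rw [abs_sub_comm]
    split
    · have := le_abs_self (Pdist r θ' q a - T r (sig r θ') r q a)
      linarith
    · have := neg_abs_le (Pdist r θ' q a - T r (sig r θ') r q a)
      rw [mul_zero]
      linarith
  calc simWin r R θ' q - TWin r R θ' q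
      = ∑ a, (Pdist r θ' q a - T r (sig r θ') r q a) * (if R q a then (1:ℝ) else 0) := by
        unfold simWin TWin
        rw [← Finset.sum_sub_distrib]
        exact Finset.sum_congr rfl fun a _ => (sub_mul _ _ _).symm
    _ ≤ ∑ a, (|T r (sig r θ') r q a - Pdist r θ' q a|
          + (Pdist r θ' q a - T r (sig r θ') r q a)) / 2 :=
        Finset.sum_le_sum fun a _ => hpoint a
    _ = ((∑ a, |T r (sig r θ') r q a - Pdist r θ' q a|)
          + ((∑ a, Pdist r θ' q a) - ∑ a, T r (sig r θ') r q a)) / 2 := by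
        rw [← Finset.sum_sub_distrib, ← Finset.sum_add_distrib, ← Finset.sum_div]
    _ ≤ 2 * ∑ k ∈ Finset.Icc 1 r, cerr r θ' k q := by
        rw [hT1, hP1]
        linarith

lemma seqWin_sig_lower (hπ0 : ∀ q, 0 ≤ π q) (hθ' : IsNoSignalingStrategy r θ') (hr : 1 ≤ r) :
    (∑ q, π q * simWin r R θ' q) - 2 * ∑ k ∈ Finset.Icc 1 r, cbar r π θ' k
      ≤ seqWinProb r π R (sig r θ') := by
  rw [seqWin_sig]
  have key2 : (∑ q, π q * simWin r R θ' q) - (∑ q, π q * TWin r R θ' q)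
      ≤ 2 * ∑ k ∈ Finset.Icc 1 r, cbar r π θ' k := by
    calc (∑ q, π q * simWin r R θ' q) - (∑ q, π q * TWin r R θ' q)
        = ∑ q, (π q * simWin r R θ' q - π q * TWin r R θ' q) := (Finset.sum_sub_distrib _ _).symm
      _ ≤ ∑ q, π q * (2 * ∑ k ∈ Finset.Icc 1 r, cerr r θ' k q) := by
          refine Finset.sum_le_sum fun q _ => ?_
          rw [← mul_sub]
          exact mul_le_mul_of_nonneg_left (sim_minus_TWin R θ' hθ' hr q) (hπ0 q)
      _ = 2 * ∑ q, π q * ∑ k ∈ Finset.Icc 1 r, cerr r θ' k q := by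
          rw [Finset.mul_sum]
          exact Finset.sum_congr rfl fun q _ => by ring
      _ = 2 * ∑ k ∈ Finset.Icc 1 r, cbar r π θ' k := by
          congr 1
          calc ∑ q, π q * ∑ k ∈ Finset.Icc 1 r, cerr r θ' k q
              = ∑ q, ∑ k ∈ Finset.Icc 1 r, π q * cerr r θ' k q :=
                Finset.sum_congr rfl fun q _ => Finset.mul_sum _ _ _
            _ = ∑ k ∈ Finset.Icc 1 r, ∑ q, π q * cerr r θ' k q := Finset.sum_comm
            _ = ∑ k ∈ Finset.Icc 1 r, cbar r π θ' k := rfl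
  linarith

lemma sim_ge (hπ0 : ∀ q, 0 ≤ π q) (hπ1 : ∑ q, π q = 1) (hθ' : IsNoSignalingStrategy r θ')
    (hr : 1 ≤ r) :
    1 - (∑ k ∈ Finset.Icc 1 r, (1 - accP r π R θ' k)) ≤ ∑ q, π q * simWin r R θ' q := by
  have h1mem : (1 : ℕ) ∈ Finset.Icc 1 r := Finset.mem_Icc.mpr ⟨le_rfl, hr⟩
  have hterm : ∀ k ∈ Finset.Icc 1 r, (0:ℝ) ≤ 1 - accP r π R θ' k := by
    intro k hk
    obtain ⟨hk1, hk2⟩ := Finset.mem_Icc.mp hk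
    have := accP_add_cbar_le π R θ' hπ0 hπ1 hθ' hk1 hk2
    have := cbar_nonneg π θ' hπ0 hθ' hk1 hk2
    linarith
  have hsingle : (1:ℝ) - accP r π R θ' 1 ≤ ∑ k ∈ Finset.Icc 1 r, (1 - accP r π R θ' k) :=
    Finset.single_le_sum hterm h1mem
  have := accP_one_le π R θ' hπ0 hθ' hr
  linarith

end Assemble

end OracAux

/-- Lemma `wns`.  If `G'` is the oracularization of a nonadaptive-query
single-prover `r`-round game `G`, then every no-signaling strategy of `G'` wins with
probability at most `1 − (1 − w(G))/(3r)`; hence `w_ns(G') ≤ 1 − (1 − w(G))/(3r)`. -/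
theorem oracularization_no_signaling_value_bound
    {Q A : Type*} [Fintype Q] [Fintype A] [Nonempty Q] [Nonempty A]
    (r : ℕ) (hr : 1 ≤ r)
    (π : (Fin r → Q) → ℝ) (R : (Fin r → Q) → (Fin r → A) → Bool)
    (hπ0 : ∀ q, 0 ≤ π q) (hπ1 : ∑ q, π q = 1)
    (θ' : (Fin r → Q) → (k : ℕ) → (Fin r → A) → (Fin k → A) → ℝ)
    (hθ' : IsNoSignalingStrategy r θ') :
    oracWinProb r π R θ' ≤ 1 - (1 - seqGameValue r π R) / (3 * r) := by
  have hr0 : (0:ℝ) < r := by exact_mod_cast hr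
  have hrne : (r:ℝ) ≠ 0 := ne_of_gt hr0
  have h3r : (0:ℝ) < 3 * r := by linarith
  have hW1 := OracAux.seqWin_sig_lower π R θ' hπ0 hθ' hr
  have hW2 := OracAux.sim_ge π R θ' hπ0 hπ1 hθ' hr
  have hV := OracAux.sig_le_value π R θ' hπ0 hπ1 hθ'
  have hcb : ∀ k ∈ Finset.Icc 1 r, OracAux.cbar r π θ' k ≤ 1 - OracAux.accP r π R θ' k := by
    intro k hk
    obtain ⟨h1, h2⟩ := Finset.mem_Icc.mp hk
    have := OracAux.accP_add_cbar_le π R θ' hπ0 hπ1 hθ' h1 h2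
    linarith
  have hcbsum : ∑ k ∈ Finset.Icc 1 r, OracAux.cbar r π θ' k
      ≤ ∑ k ∈ Finset.Icc 1 r, (1 - OracAux.accP r π R θ' k) := Finset.sum_le_sum hcb
  have hAcc : ∑ k ∈ Finset.Icc 1 r, OracAux.accP r π R θ' k
      = (r : ℝ) * oracWinProb r π R θ' := by
    rw [OracAux.orac_eq, ← mul_assoc, mul_one_div, div_self hrne, one_mul]
  have hEr : ∑ k ∈ Finset.Icc 1 r, (1 - OracAux.accP r π R θ' k)
      = (r : ℝ) - (r : ℝ) * oracWinProb r π R θ' := by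
    rw [Finset.sum_sub_distrib, Finset.sum_const, Nat.card_Icc, hAcc]
    simp
  have hfinal : 1 - seqGameValue r π R
      ≤ 3 * (r : ℝ) * (1 - oracWinProb r π R θ') := by
    have hexp : 3 * (r:ℝ) * (1 - oracWinProb r π R θ')
        = 3 * ((r:ℝ) - (r:ℝ) * oracWinProb r π R θ') := by ring
    linarith
  have heq : (1 - oracWinProb r π R θ') * (3 * (r:ℝ))
      = 3 * (r:ℝ) * (1 - oracWinProb r π R θ') := by ring
  have hdiv : (1 - seqGameValue r π R) / (3 * (r:ℝ)) ≤ 1 - oracWinProb r π R θ' := by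
    rw [div_le_iff₀ h3r]
    linarith
  linarith

end
end

section
/- Let G = (Q, A, R, π) be a nonadaptive-query single-prover r-round game with r ≥ 2, let G' be its oracularization, and let θ' be a no-signaling strategy of G'. For q ∈ Q^r and k ∈ {1,...,r}, let ε_cons(q,k) = Σ_{a∈A^r, a'∈A^k : a_{[1,k]} ≠ a'} θ'(a, a' | q, q_{[1,k]}), and let β_{q_{[1,k]}}(a') = Σ_{a∈A^r} θ'(a, a' | q, q_{[1,k]}) (which depends only on q_{[1,k]} by the no-signaling condition). For each k define θ^(k)(a_k | q_{[1,k]}, a_{[1,k-1]}) = β_{q_{[1,k]}}(a_{[1,k]}) / Σ_{a∈A} β_{q_{[1,k]}}((a_{[1,k-1]}, a)) whenever the denominator is positive (for k = 1 the denominator is taken to be 1), and an arbitrary probability distribution on A when it is zero; and define the distribution h^⟨k⟩_q on A^r by h^⟨k⟩_q(a) = β_{q_{[1,k]}}(a_{[1,k]}) ∏_{i=k+1}^r θ^(i)(a_i | q_{[1,i]}, a_{[1,i-1]}). Then for every q ∈ Q^r and every k with 2 ≤ k ≤ r, SD(h^⟨k-1⟩_q, h^⟨k⟩_q) ≤ ε_cons(q,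 k−1) + ε_cons(q, k). -/
attribute [local instance] Classical.propDecidable

noncomputable section

/-- Statistical difference between two functions on a finite set. -/
def statDiff {S : Type*} [Fintype S] (p q : S → ℝ) : ℝ :=
  (1 / 2) * ∑ s, |p s - q s|

/-- `ε_cons(q, k)`: the probability that the strategy `θ'` fails the Consistency Test,
conditioned on the first prover being asked `q` and the second prover `q_{[1,k]}`. -/
def consFail {Q A : Type*} [Fintype Q] [Fintype A] (r : ℕ)
    (θ' : (Fin r → Q) → (k : ℕ) → (Fin r → A) → (Fin k → A) → ℝ)
    (q : Fin r → Q) (k : ℕ) : ℝ :=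
  ∑ a : Fin r → A, ∑ a' : Fin k → A,
    if consistentPrefix r k a a' then 0 else θ' q k a a'

/-- `β_{q_{[1,k]}}(a') = Σ_{a ∈ A^r} θ'(a, a' | q, q_{[1,k]})`: the distribution of the second
prover's answer (which depends only on `q_{[1,k]}`, by the no-signaling condition). -/
def betaNS {Q A : Type*} [Fintype Q] [Fintype A] (r : ℕ)
    (θ' : (Fin r → Q) → (k : ℕ) → (Fin r → A) → (Fin k → A) → ℝ)
    (q : Fin r → Q) (k : ℕ) (a' : Fin k → A) : ℝ :=
  ∑ a : Fin r → A, θ' q k a a'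

/-- The hybrid distribution `h^⟨k⟩_q` on `A^r`:
`h^⟨k⟩_q(a) = β_{q_{[1,k]}}(a_{[1,k]}) ∏_{i=k+1}^{r} θ^(i)(a_i | q_{[1,i]}, a_{[1,i-1]})`,
where `θc q j pre a` stands for `θ^(j+1)(a | q_{[1,j+1]}, pre)`. -/
def hybridNS {Q A : Type*} [Fintype Q] [Fintype A] [Nonempty Q] [Nonempty A] (r : ℕ)
    (θ' : (Fin r → Q) → (k : ℕ) → (Fin r → A) → (Fin k → A) → ℝ)
    (θc : (Fin r → Q) → (j : ℕ) → (Fin j → A) → A → ℝ)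
    (q : Fin r → Q) (k : ℕ) (a : Fin r → A) : ℝ :=
  betaNS r θ' q k (pref a k) *
    ∏ j ∈ Finset.Ico k r, (if h : j < r then θc q j (pref a j) (a ⟨j, h⟩) else 1)

/-- `θc` gives the conditional probabilities obtained from the marginals `β`:
`θ^(k)(a_k | q_{[1,k]}, a_{[1,k-1]}) = β_{q_{[1,k]}}(a_{[1,k]})/Σ_a β_{q_{[1,k]}}(a_{[1,k-1]},a)`
whenever the denominator is positive, and an arbitrary distribution where it vanishes. -/
def IsConditional {Q A : Type*} [Fintype Q] [Fintype A] (r : ℕ)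
    (θ' : (Fin r → Q) → (k : ℕ) → (Fin r → A) → (Fin k → A) → ℝ)
    (θc : (Fin r → Q) → (j : ℕ) → (Fin j → A) → A → ℝ) : Prop :=
  (∀ q j, j + 1 ≤ r → ∀ pre : Fin j → A,
    (∀ a, 0 ≤ θc q j pre a) ∧ (∑ a, θc q j pre a) = 1) ∧
  (∀ q j, j + 1 ≤ r → ∀ pre : Fin j → A,
    0 < (∑ b, betaNS r θ' q (j + 1) (Fin.snoc pre b)) →
    ∀ a, θc q j pre a =
      betaNS r θ' q (j + 1) (Fin.snoc pre a) /
        ∑ b, betaNS r θ' q (j + 1) (Fin.snoc pre b))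


section Aux

variable {Q A : Type*} [Fintype Q] [Fintype A] [Nonempty Q] [Nonempty A]

lemma pref_apply {r m : ℕ} (a : Fin r → A) (i : Fin m) (h : (i : ℕ) < r) :
    pref a m i = a ⟨i, h⟩ := by simp [pref, h]

lemma pref_eq_self {r : ℕ} (a : Fin r → A) : pref a r = a := by
  funext i; simp [pref, i.isLt]

lemma pref_pref {r m n : ℕ} (a : Fin r → A) (hmn : m ≤ n) (hn : n ≤ r) :
    pref (pref a n) m = pref a m := by
  funext i
  have h1 : (i : ℕ) < n := lt_of_lt_of_le i.isLt hmn
  have h2 : (i : ℕ) < r := lt_of_lt_of_le h1 hn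
  simp [pref, h1, h2]

lemma pref_snoc {m : ℕ} (u : Fin m → A) (b : A) :
    pref (Fin.snoc u b : Fin (m+1) → A) m = u := by
  funext i
  have h : (i : ℕ) < m + 1 := Nat.lt_succ_of_lt i.isLt
  have e : (⟨(i : ℕ), h⟩ : Fin (m+1)) = Fin.castSucc i := rfl
  rw [pref_apply _ i h, e, Fin.snoc_castSucc]

lemma snoc_last_apply {m : ℕ} (u : Fin m → A) (b : A) :
    (Fin.snoc u b : Fin (m+1) → A) ⟨m, Nat.lt_succ_self m⟩ = b := by
  have e : (⟨m, Nat.lt_succ_self m⟩ : Fin (m+1)) = Fin.last m := rfl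
  rw [e, Fin.snoc_last]

lemma pref_succ {r m : ℕ} (a : Fin r → A) (h : m < r) :
    pref a (m+1) = Fin.snoc (pref a m) (a ⟨m, h⟩) := by
  funext i
  refine Fin.lastCases ?_ (fun j => ?_) i
  · rw [Fin.snoc_last]
    exact pref_apply a (Fin.last m) h
  · have hj : (j : ℕ) < r := lt_trans j.isLt h
    rw [Fin.snoc_castSucc, pref_apply a j hj]
    exact pref_apply a (Fin.castSucc j) hj

lemma snoc_eq_snoc_iff {m : ℕ} (p u : Fin m → A) (c b : A) :
    (Fin.snoc p c : Fin (m+1) → A) = Fin.snoc u b ↔ p = u ∧ c = b := by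
  constructor
  · intro h
    constructor
    · funext i
      have := congrFun h (Fin.castSucc i)
      simpa [Fin.snoc_castSucc] using this
    · have := congrFun h (Fin.last m)
      simpa [Fin.snoc_last] using this
  · rintro ⟨rfl, rfl⟩; rfl

lemma sum_snoc {m : ℕ} (f : (Fin (m+1) → A) → ℝ) :
    ∑ w : Fin (m+1) → A, f w = ∑ u : Fin m → A, ∑ b : A, f (Fin.snoc u b) := by
  rw [← Equiv.sum_comp (Fin.snocEquiv (fun _ => A)) f, Fintype.sum_prod_type,
    Finset.sum_comm]
  rfl

lemma consistent_iff {r m : ℕ} (hmr : m ≤ r) (a : Fin r → A) (a' : Fin m → A) :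
    consistentPrefix r m a a' ↔ pref a m = a' := by
  constructor
  · intro h
    funext i
    have hi : (i : ℕ) < r := lt_of_lt_of_le i.isLt hmr
    rw [pref_apply a i hi]; exact h i hi
  · intro h i hi
    rw [← h]; exact (pref_apply a i hi).symm

/-- Telescoping: summing a function of a length-`m` prefix times the tail conditionals
over all of `A^r` gives the plain sum over `A^m`. -/
lemma sum_tail {r : ℕ} (θc : (Fin r → Q) → (j : ℕ) → (Fin j → A) → A → ℝ)
    (hpos : ∀ q j, j + 1 ≤ r → ∀ pre : Fin j → A,
      (∀ a, 0 ≤ θc q j pre a) ∧ (∑ a, θc q j pre a) = 1)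
    (q : Fin r → Q) :
    ∀ d m, m + d = r → ∀ g : (Fin m → A) → ℝ,
      (∑ a : Fin r → A, g (pref a m) *
        ∏ j ∈ Finset.Ico m r, (if h : j < r then θc q j (pref a j) (a ⟨j, h⟩) else 1))
        = ∑ w : Fin m → A, g w := by
  intro d
  induction d with
  | zero =>
    intro m hm g
    have hmr : m = r := by omega
    subst hmr
    simp [pref_eq_self]
  | succ d ih =>
    intro m hm g
    have hmr : m < r := by omega
    have key : ∀ a : Fin r → A,
        g (pref a m) *
          ∏ j ∈ Finset.Ico m r, (if h : j < r then θc q j (pref a j) (a ⟨j, h⟩) else 1)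
        = (fun w : Fin (m+1) → A =>
            g (pref w m) * θc q m (pref w m) (w ⟨m, Nat.lt_succ_self m⟩)) (pref a (m+1)) *
          ∏ j ∈ Finset.Ico (m+1) r, (if h : j < r then θc q j (pref a j) (a ⟨j, h⟩) else 1) := by
      intro a
      rw [Finset.prod_eq_prod_Ico_succ_bot hmr]
      simp only
      rw [pref_pref a (Nat.le_succ m) (by omega),
        pref_apply a (⟨m, Nat.lt_succ_self m⟩ : Fin (m+1)) hmr, dif_pos hmr]
      ring
    rw [Finset.sum_congr rfl (fun a _ => key a),
      ih (m+1) (by omega) (fun w : Fin (m+1) → A =>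
        g (pref w m) * θc q m (pref w m) (w ⟨m, Nat.lt_succ_self m⟩)), sum_snoc]
    refine Finset.sum_congr rfl (fun u _ => ?_)
    have h1 : ∀ b : A,
        (fun w : Fin (m+1) → A =>
          g (pref w m) * θc q m (pref w m) (w ⟨m, Nat.lt_succ_self m⟩)) (Fin.snoc u b)
        = g u * θc q m u b := by
      intro b
      simp only
      rw [pref_snoc, snoc_last_apply]
    rw [Finset.sum_congr rfl (fun b _ => h1 b), ← Finset.mul_sum,
      (hpos q m (by omega) u).2, mul_one]

lemma betaNS_nonneg {r : ℕ}
    (θ' : (Fin r → Q) → (k : ℕ) → (Fin r → A) → (Fin k → A) → ℝ)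
    (q : Fin r → Q) (m : ℕ) (hnn : ∀ a a', 0 ≤ θ' q m a a') (u : Fin m → A) :
    0 ≤ betaNS r θ' q m u :=
  Finset.sum_nonneg fun a _ => hnn a u

/-- The second prover's answer distribution is `2 ε_cons`-close to the marginal of the
first prover's answer prefix. -/
lemma marg_close {r : ℕ}
    (θ' : (Fin r → Q) → (k : ℕ) → (Fin r → A) → (Fin k → A) → ℝ)
    (q : Fin r → Q) (m : ℕ) (hmr : m ≤ r)
    (hnn : ∀ a a', 0 ≤ θ' q m a a') :
    ∑ u : Fin m → A,
      |betaNS r θ' q m u -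
        ∑ a : Fin r → A, (if pref a m = u then ∑ a' : Fin m → A, θ' q m a a' else 0)|
      ≤ 2 * consFail r θ' q m := by
  have step1 : ∀ u : Fin m → A,
      betaNS r θ' q m u -
        (∑ a : Fin r → A, (if pref a m = u then ∑ a' : Fin m → A, θ' q m a a' else 0))
      = ∑ a : Fin r → A, ∑ a' : Fin m → A, θ' q m a a' *
          ((if a' = u then (1:ℝ) else 0) - (if pref a m = u then (1:ℝ) else 0)) := by
    intro u
    rw [betaNS, ← Finset.sum_sub_distrib]
    refine Finset.sum_congr rfl (fun a _ => ?_)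
    have e1 : (∑ a' : Fin m → A, θ' q m a a' * (if a' = u then (1:ℝ) else 0))
        = θ' q m a u := by
      simp [mul_ite]
    have e2 : (∑ a' : Fin m → A, θ' q m a a' * (if pref a m = u then (1:ℝ) else 0))
        = (if pref a m = u then ∑ a' : Fin m → A, θ' q m a a' else 0) := by
      by_cases h : pref a m = u <;> simp [h]
    calc θ' q m a u - (if pref a m = u then ∑ a' : Fin m → A, θ' q m a a' else 0)
        = (∑ a' : Fin m → A, θ' q m a a' * (if a' = u then (1:ℝ) else 0))
          - ∑ a' : Fin m → A, θ' q m a a' * (if pref a m = u then (1:ℝ) else 0) := by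
          rw [e1, e2]
      _ = _ := by rw [← Finset.sum_sub_distrib]; exact Finset.sum_congr rfl fun a' _ => by ring
  have step2 : ∀ u : Fin m → A,
      |betaNS r θ' q m u -
        ∑ a : Fin r → A, (if pref a m = u then ∑ a' : Fin m → A, θ' q m a a' else 0)|
      ≤ ∑ a : Fin r → A, ∑ a' : Fin m → A, θ' q m a a' *
          |(if a' = u then (1:ℝ) else 0) - (if pref a m = u then (1:ℝ) else 0)| := by
    intro u
    rw [step1 u]
    refine le_trans (Finset.abs_sum_le_sum_abs _ _) ?_
    refine Finset.sum_le_sum (fun a _ => ?_)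
    refine le_trans (Finset.abs_sum_le_sum_abs _ _) ?_
    refine Finset.sum_le_sum (fun a' _ => ?_)
    rw [abs_mul, abs_of_nonneg (hnn a a')]
  calc ∑ u : Fin m → A,
        |betaNS r θ' q m u -
          ∑ a : Fin r → A, (if pref a m = u then ∑ a' : Fin m → A, θ' q m a a' else 0)|
      ≤ ∑ u : Fin m → A, ∑ a : Fin r → A, ∑ a' : Fin m → A, θ' q m a a' *
          |(if a' = u then (1:ℝ) else 0) - (if pref a m = u then (1:ℝ) else 0)| :=
        Finset.sum_le_sum fun u _ => step2 u
    _ = ∑ a : Fin r → A, ∑ a' : Fin m → A, θ' q m a a' *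
          ∑ u : Fin m → A,
            |(if a' = u then (1:ℝ) else 0) - (if pref a m = u then (1:ℝ) else 0)| := by
        rw [Finset.sum_comm]
        refine Finset.sum_congr rfl (fun a _ => ?_)
        rw [Finset.sum_comm]
        exact Finset.sum_congr rfl fun a' _ => by rw [Finset.mul_sum]
    _ = ∑ a : Fin r → A, ∑ a' : Fin m → A,
          θ' q m a a' * (if pref a m = a' then 0 else 2) := by
        refine Finset.sum_congr rfl (fun a _ => Finset.sum_congr rfl (fun a' _ => ?_))
        congr 1
        by_cases h : pref a m = a'
        · simp [h]
        · have hterm : ∀ u : Fin m → A,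
              |(if a' = u then (1:ℝ) else 0) - (if pref a m = u then (1:ℝ) else 0)|
              = (if a' = u then (1:ℝ) else 0) + (if pref a m = u then (1:ℝ) else 0) := by
            intro u
            by_cases h1 : a' = u <;> by_cases h2 : pref a m = u
            · exact absurd (h2.trans h1.symm) h
            · simp [h1, h2]
            · simp [h1, h2, abs_of_nonpos]
            · simp [h1, h2]
          rw [Finset.sum_congr rfl (fun u _ => hterm u), Finset.sum_add_distrib]
          simp [h, Finset.sum_ite_eq]
          norm_num
    _ = 2 * consFail r θ' q m := by
        rw [consFail, Finset.mul_sum]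
        refine Finset.sum_congr rfl (fun a _ => ?_)
        rw [Finset.mul_sum]
        refine Finset.sum_congr rfl (fun a' _ => ?_)
        rw [if_congr (consistent_iff hmr a a') rfl rfl]
        by_cases h : pref a m = a' <;> simp [h] <;> ring

end Aux

/-- The integrand appearing after collapsing the tail of the hybrid difference. -/
def gmid {Q A : Type*} [Fintype Q] [Fintype A] [Nonempty Q] [Nonempty A] (r : ℕ)
    (θ' : (Fin r → Q) → (k : ℕ) → (Fin r → A) → (Fin k → A) → ℝ)
    (θc : (Fin r → Q) → (j : ℕ) → (Fin j → A) → A → ℝ)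
    (q : Fin r → Q) (k : ℕ) (w : Fin (k+1) → A) : ℝ :=
  |betaNS r θ' q k (pref w k) * θc q k (pref w k) (w ⟨k, Nat.lt_succ_self k⟩) -
    betaNS r θ' q (k+1) w|

set_option maxHeartbeats 1600000 in
/-- Claim `hybrid`.  For a no-signaling strategy `θ'` of the oracularized
game and the associated hybrid distributions, for every `q` and every cutoff (`1 ≤ k`,
`k + 1 ≤ r`), `SD(h^⟨k⟩_q, h^⟨k+1⟩_q) ≤ ε_cons(q, k) + ε_cons(q, k+1)`. -/
theorem hybrid_statDiff_le_consFail
    {Q A : Type*} [Fintype Q] [Fintype A] [Nonempty Q] [Nonempty A]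
    (r : ℕ)
    (θ' : (Fin r → Q) → (k : ℕ) → (Fin r → A) → (Fin k → A) → ℝ)
    (hθ' : IsNoSignalingStrategy r θ')
    (θc : (Fin r → Q) → (j : ℕ) → (Fin j → A) → A → ℝ)
    (hθc : IsConditional r θ' θc)
    (q : Fin r → Q) (k : ℕ) (hk : 1 ≤ k) (hkr : k + 1 ≤ r) :
    statDiff (hybridNS r θ' θc q k) (hybridNS r θ' θc q (k + 1)) ≤
      consFail r θ' q k + consFail r θ' q (k + 1) := by
  have hk' : k < r := hkr
  have hnnk : ∀ a a', 0 ≤ θ' q k a a' := hθ'.1 q k hk (by omega)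
  have hnnk1 : ∀ a a', 0 ≤ θ' q (k+1) a a' := hθ'.1 q (k+1) (by omega) hkr
  -- Step A : collapse the tail of the hybrid difference
  have hA : (∑ a : Fin r → A, |hybridNS r θ' θc q k a - hybridNS r θ' θc q (k+1) a|)
      = ∑ w : Fin (k+1) → A, gmid r θ' θc q k w := by
    have point : ∀ a : Fin r → A,
        |hybridNS r θ' θc q k a - hybridNS r θ' θc q (k+1) a|
        = gmid r θ' θc q k (pref a (k+1)) *
          ∏ j ∈ Finset.Ico (k+1) r, (if h : j < r then θc q j (pref a j) (a ⟨j, h⟩) else 1) := by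
      intro a
      have hPnn : 0 ≤ ∏ j ∈ Finset.Ico (k+1) r,
          (if h : j < r then θc q j (pref a j) (a ⟨j, h⟩) else 1) := by
        refine Finset.prod_nonneg (fun j hj => ?_)
        have hjr : j < r := (Finset.mem_Ico.mp hj).2
        rw [dif_pos hjr]
        exact (hθc.1 q j hjr (pref a j)).1 _
      have e1 : hybridNS r θ' θc q k a
          = betaNS r θ' q k (pref a k) * θc q k (pref a k) (a ⟨k, hk'⟩) *
            ∏ j ∈ Finset.Ico (k+1) r,
              (if h : j < r then θc q j (pref a j) (a ⟨j, h⟩) else 1) := by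
        rw [hybridNS, Finset.prod_eq_prod_Ico_succ_bot hk', dif_pos hk']
        ring
      have e3 : gmid r θ' θc q k (pref a (k+1))
          = |betaNS r θ' q k (pref a k) * θc q k (pref a k) (a ⟨k, hk'⟩) -
              betaNS r θ' q (k+1) (pref a (k+1))| := by
        rw [gmid, pref_pref a (Nat.le_succ k) hkr,
          pref_apply a (⟨k, Nat.lt_succ_self k⟩ : Fin (k+1)) hk']
      rw [e1, hybridNS, e3, ← sub_mul, abs_mul, abs_of_nonneg hPnn]
    rw [Finset.sum_congr rfl (fun a _ => point a)]
    exact sum_tail θc hθc.1 q (r - (k+1)) (k+1) (by omega) (gmid r θ' θc q k)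
  -- Step B : the middle sum equals the distance between βₖ and the marginal of β_{k+1}
  have hB : (∑ w : Fin (k+1) → A, gmid r θ' θc q k w)
      = ∑ u : Fin k → A,
          |betaNS r θ' q k u - ∑ b, betaNS r θ' q (k+1) (Fin.snoc u b)| := by
    rw [sum_snoc]
    refine Finset.sum_congr rfl (fun u _ => ?_)
    have hg : ∀ b, gmid r θ' θc q k (Fin.snoc u b)
        = |betaNS r θ' q k u * θc q k u b - betaNS r θ' q (k+1) (Fin.snoc u b)| := by
      intro b; rw [gmid, pref_snoc, snoc_last_apply]
    rw [Finset.sum_congr rfl (fun b _ => hg b)]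
    have hSnn : 0 ≤ ∑ b, betaNS r θ' q (k+1) (Fin.snoc u b) :=
      Finset.sum_nonneg fun b _ => betaNS_nonneg θ' q (k+1) hnnk1 _
    rcases lt_or_eq_of_le hSnn with hpos | hzero
    · have hcond := hθc.2 q k hkr u hpos
      have hterm : ∀ b,
          |betaNS r θ' q k u * θc q k u b - betaNS r θ' q (k+1) (Fin.snoc u b)|
          = betaNS r θ' q (k+1) (Fin.snoc u b) *
            (|betaNS r θ' q k u - ∑ c, betaNS r θ' q (k+1) (Fin.snoc u c)| /
              ∑ c, betaNS r θ' q (k+1) (Fin.snoc u c)) := by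
        intro b
        rw [hcond b]
        have hne : (∑ c, betaNS r θ' q (k+1) (Fin.snoc u c)) ≠ 0 := ne_of_gt hpos
        have e : betaNS r θ' q k u *
              (betaNS r θ' q (k+1) (Fin.snoc u b) /
                ∑ c, betaNS r θ' q (k+1) (Fin.snoc u c)) -
              betaNS r θ' q (k+1) (Fin.snoc u b)
            = betaNS r θ' q (k+1) (Fin.snoc u b) *
              ((betaNS r θ' q k u - ∑ c, betaNS r θ' q (k+1) (Fin.snoc u c)) /
                ∑ c, betaNS r θ' q (k+1) (Fin.snoc u c)) := by
          field_simp
          try ring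
        rw [e, abs_mul, abs_div, abs_of_nonneg (betaNS_nonneg θ' q (k+1) hnnk1 _),
          abs_of_pos hpos]
      rw [Finset.sum_congr rfl (fun b _ => hterm b), ← Finset.sum_mul, mul_comm,
        div_mul_cancel₀ _ (ne_of_gt hpos)]
    · have hz : ∀ b, betaNS r θ' q (k+1) (Fin.snoc u b) = 0 := by
        intro b
        exact (Finset.sum_eq_zero_iff_of_nonneg
          (fun c _ => betaNS_nonneg θ' q (k+1) hnnk1 _)).mp hzero.symm b (Finset.mem_univ b)
      have hterm : ∀ b,
          |betaNS r θ' q k u * θc q k u b - betaNS r θ' q (k+1) (Fin.snoc u b)|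
          = betaNS r θ' q k u * θc q k u b := by
        intro b
        rw [hz b, sub_zero,
          abs_of_nonneg (mul_nonneg (betaNS_nonneg θ' q k hnnk _) ((hθc.1 q k hkr u).1 b))]
      rw [Finset.sum_congr rfl (fun b _ => hterm b), ← Finset.mul_sum,
        (hθc.1 q k hkr u).2, mul_one, ← hzero, sub_zero,
        abs_of_nonneg (betaNS_nonneg θ' q k hnnk _)]
  -- Step C : βₖ is close to the first prover's prefix marginal
  have hC : ∑ u : Fin k → A,
      |betaNS r θ' q k u -
        ∑ a : Fin r → A, (if pref a k = u then ∑ a' : Fin k → A, θ' q k a a' else 0)|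
      ≤ 2 * consFail r θ' q k := marg_close θ' q k (by omega) hnnk
  have hD : ∑ w : Fin (k+1) → A,
      |betaNS r θ' q (k+1) w -
        ∑ a : Fin r → A, (if pref a (k+1) = w then ∑ a' : Fin (k+1) → A, θ' q (k+1) a a' else 0)|
      ≤ 2 * consFail r θ' q (k+1) := marg_close θ' q (k+1) hkr hnnk1
  -- the two prefix marginals agree
  have hlink : ∀ u : Fin k → A,
      (∑ b, ∑ a : Fin r → A,
        (if pref a (k+1) = Fin.snoc u b then ∑ a' : Fin (k+1) → A, θ' q (k+1) a a' else 0))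
      = ∑ a : Fin r → A, (if pref a k = u then ∑ a' : Fin k → A, θ' q k a a' else 0) := by
    intro u
    rw [Finset.sum_comm]
    refine Finset.sum_congr rfl (fun a _ => ?_)
    have hmarg : (∑ a' : Fin (k+1) → A, θ' q (k+1) a a') = ∑ a' : Fin k → A, θ' q k a a' :=
      hθ'.2.2.1 q (k+1) k (by omega) hkr hk (by omega) a
    have e : ∀ b, (if pref a (k+1) = Fin.snoc u b
          then ∑ a' : Fin (k+1) → A, θ' q (k+1) a a' else 0)
        = if pref a k = u ∧ a ⟨k, hk'⟩ = b then ∑ a' : Fin k → A, θ' q k a a' else 0 := by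
      intro b
      rw [pref_succ a hk', hmarg]
      exact if_congr (snoc_eq_snoc_iff _ _ _ _) rfl rfl
    rw [Finset.sum_congr rfl (fun b _ => e b)]
    by_cases hu : pref a k = u
    · simp [hu]
    · simp [hu]
  -- Step D : the marginal of β_{k+1} is also close to the same prefix marginal
  have hγ : ∑ u : Fin k → A,
      |(∑ a : Fin r → A, (if pref a k = u then ∑ a' : Fin k → A, θ' q k a a' else 0)) -
        ∑ b, betaNS r θ' q (k+1) (Fin.snoc u b)|
      ≤ 2 * consFail r θ' q (k+1) := by
    calc ∑ u : Fin k → A,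
        |(∑ a : Fin r → A, (if pref a k = u then ∑ a' : Fin k → A, θ' q k a a' else 0)) -
          ∑ b, betaNS r θ' q (k+1) (Fin.snoc u b)|
        = ∑ u : Fin k → A,
          |∑ b, ((∑ a : Fin r → A,
              (if pref a (k+1) = Fin.snoc u b then ∑ a' : Fin (k+1) → A, θ' q (k+1) a a' else 0))
            - betaNS r θ' q (k+1) (Fin.snoc u b))| := by
          refine Finset.sum_congr rfl (fun u _ => ?_)
          rw [Finset.sum_sub_distrib, hlink u]
      _ ≤ ∑ u : Fin k → A, ∑ b,
          |(∑ a : Fin r → A,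
              (if pref a (k+1) = Fin.snoc u b then ∑ a' : Fin (k+1) → A, θ' q (k+1) a a' else 0))
            - betaNS r θ' q (k+1) (Fin.snoc u b)| :=
          Finset.sum_le_sum fun u _ => Finset.abs_sum_le_sum_abs _ _
      _ = ∑ w : Fin (k+1) → A,
          |(∑ a : Fin r → A,
              (if pref a (k+1) = w then ∑ a' : Fin (k+1) → A, θ' q (k+1) a a' else 0))
            - betaNS r θ' q (k+1) w| :=
          (sum_snoc (fun w : Fin (k+1) → A =>
            |(∑ a : Fin r → A,
              (if pref a (k+1) = w then ∑ a' : Fin (k+1) → A, θ' q (k+1) a a' else 0))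
            - betaNS r θ' q (k+1) w|)).symm
      _ = ∑ w : Fin (k+1) → A,
          |betaNS r θ' q (k+1) w -
            ∑ a : Fin r → A,
              (if pref a (k+1) = w then ∑ a' : Fin (k+1) → A, θ' q (k+1) a a' else 0)| :=
          Finset.sum_congr rfl fun w _ => abs_sub_comm _ _
      _ ≤ 2 * consFail r θ' q (k+1) := hD
  -- assemble
  have hfinal : (∑ u : Fin k → A,
      |betaNS r θ' q k u - ∑ b, betaNS r θ' q (k+1) (Fin.snoc u b)|)
      ≤ 2 * consFail r θ' q k + 2 * consFail r θ' q (k+1) := by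
    calc (∑ u : Fin k → A,
        |betaNS r θ' q k u - ∑ b, betaNS r θ' q (k+1) (Fin.snoc u b)|)
        ≤ ∑ u : Fin k → A,
          (|betaNS r θ' q k u -
              ∑ a : Fin r → A, (if pref a k = u then ∑ a' : Fin k → A, θ' q k a a' else 0)| +
            |(∑ a : Fin r → A, (if pref a k = u then ∑ a' : Fin k → A, θ' q k a a' else 0)) -
              ∑ b, betaNS r θ' q (k+1) (Fin.snoc u b)|) :=
          Finset.sum_le_sum fun u _ => abs_sub_le _ _ _
      _ = (∑ u : Fin k → A,
            |betaNS r θ' q k u -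
              ∑ a : Fin r → A, (if pref a k = u then ∑ a' : Fin k → A, θ' q k a a' else 0)|) +
          ∑ u : Fin k → A,
            |(∑ a : Fin r → A, (if pref a k = u then ∑ a' : Fin k → A, θ' q k a a' else 0)) -
              ∑ b, betaNS r θ' q (k+1) (Fin.snoc u b)| := Finset.sum_add_distrib
      _ ≤ 2 * consFail r θ' q k + 2 * consFail r θ' q (k+1) := add_le_add hC hγ
  rw [statDiff, hA, hB]
  linarith

end
end

section
/- Let G = (Q, A, R, π) be a nonadaptive-query single-prover r-round game, let G' be its oracularization, and let θ' be a no-signaling strategy of G'. With ε_cons(q,k), β_{q_{[1,k]}}, θ^(k), and the hybrid distributions h^⟨k⟩_q defined as in the hybrid construction, for every q ∈ Q^r one has SD(h^⟨1⟩_q, h^⟨r⟩_q) ≤ 2 Σ_{k=1}^r ε_cons(q,k) = 2r ε_cons(q), where ε_cons(q) = (1/r) Σ_{k=1}^r ε_cons(q,k). -/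
attribute [local instance] Classical.propDecidable

noncomputable section

namespace HybridAux

lemma snoc_inj {A : Type*} {k : ℕ} {p q : Fin k → A} {x y : A}
    (h : (Fin.snoc p x : Fin (k + 1) → A) = Fin.snoc q y) : p = q ∧ x = y := by
  constructor
  · have := congrArg Fin.init h
    simpa [Fin.init_snoc] using this
  · have := congrFun h (Fin.last k)
    simpa [Fin.snoc_last] using this

lemma snoc_eq_snoc_iff {A : Type*} {k : ℕ} {p q : Fin k → A} {x y : A} :
    (Fin.snoc p x : Fin (k + 1) → A) = Fin.snoc q y ↔ p = q ∧ x = y := by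
  constructor
  · exact snoc_inj
  · rintro ⟨rfl, rfl⟩; rfl

def snocEquiv (A : Type*) (k : ℕ) : ((Fin k → A) × A) ≃ (Fin (k + 1) → A) where
  toFun x := Fin.snoc x.1 x.2
  invFun p := (Fin.init p, p (Fin.last k))
  left_inv x := by simp
  right_inv p := by simp

lemma sum_snoc {A : Type*} [Fintype A] {k : ℕ} (f : (Fin (k + 1) → A) → ℝ) :
    ∑ p : Fin (k + 1) → A, f p = ∑ pre : Fin k → A, ∑ b : A, f (Fin.snoc pre b) := by
  rw [← Equiv.sum_comp (snocEquiv A k) f, Fintype.sum_prod_type]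
  rfl

lemma pref_eq_self {A : Type*} [Nonempty A] {r : ℕ} (a : Fin r → A) : pref a r = a := by
  funext i
  simp [pref, i.isLt]

lemma init_pref {A : Type*} [Nonempty A] {r k : ℕ} (a : Fin r → A) :
    Fin.init (pref a (k + 1)) = pref a k := by
  funext i
  simp [Fin.init, pref]

lemma pref_last {A : Type*} [Nonempty A] {r k : ℕ} (h : k < r) (a : Fin r → A) :
    pref a (k + 1) (Fin.last k) = a ⟨k, h⟩ := by
  simp [pref, h]

lemma pref_succ {A : Type*} [Nonempty A] {r k : ℕ} (h : k < r) (a : Fin r → A) :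
    pref a (k + 1) = Fin.snoc (pref a k) (a ⟨k, h⟩) := by
  conv_lhs => rw [← Fin.snoc_init_self (pref a (k + 1))]
  rw [init_pref a, pref_last h a]

lemma consistentPrefix_iff {A : Type*} [Nonempty A] {r k : ℕ} (hk : k ≤ r)
    (a : Fin r → A) (a' : Fin k → A) :
    consistentPrefix r k a a' ↔ pref a k = a' := by
  constructor
  · intro h
    funext i
    have hi : (i : ℕ) < r := lt_of_lt_of_le i.isLt hk
    simp [pref, hi, h i hi]
  · intro h i hi
    rw [← h]
    simp [pref, hi]

section Main

variable {Q A : Type*} [Fintype Q] [Fintype A] [Nonempty Q] [Nonempty A]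

/-- Prover 1's answer distribution (independent of `k` by no-signaling). -/
def alphaNS (r : ℕ)
    (θ' : (Fin r → Q) → (k : ℕ) → (Fin r → A) → (Fin k → A) → ℝ)
    (q : Fin r → Q) (a : Fin r → A) : ℝ :=
  ∑ a' : Fin r → A, θ' q r a a'

/-- The length-`k` prefix marginal of `alphaNS`. -/
def mPre (r : ℕ)
    (θ' : (Fin r → Q) → (k : ℕ) → (Fin r → A) → (Fin k → A) → ℝ)
    (q : Fin r → Q) (k : ℕ) (pre : Fin k → A) : ℝ :=
  ∑ a : Fin r → A, if pref a k = pre then alphaNS r θ' q a else 0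

variable (r : ℕ) (hr : 1 ≤ r)
    (θ' : (Fin r → Q) → (k : ℕ) → (Fin r → A) → (Fin k → A) → ℝ)
    (hθ' : IsNoSignalingStrategy r θ') (q : Fin r → Q)

include hθ' in
lemma close_beta_m (k : ℕ) (hk1 : 1 ≤ k) (hkr : k ≤ r) (hr : 1 ≤ r) :
    ∑ pre : Fin k → A, |betaNS r θ' q k pre - mPre r θ' q k pre| ≤
      2 * consFail r θ' q k := by
  obtain ⟨hpos, -, hns3, -⟩ := hθ'
  have hθnn : ∀ (a : Fin r → A) (a' : Fin k → A), 0 ≤ θ' q k a a' := hpos q k hk1 hkr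
  have halpha : ∀ a : Fin r → A, (∑ a' : Fin k → A, θ' q k a a') = alphaNS r θ' q a :=
    fun a => hns3 q k r hk1 hkr hr le_rfl a
  set C : (Fin k → A) → ℝ :=
    fun pre => ∑ a : Fin r → A, if pref a k = pre then θ' q k a pre else 0 with hC
  have hCB : ∀ pre, C pre ≤ betaNS r θ' q k pre := by
    intro pre
    apply Finset.sum_le_sum
    intro a _
    by_cases h : pref a k = pre <;> simp [h, hθnn]
  have hCm : ∀ pre, C pre ≤ mPre r θ' q k pre := by
    intro pre
    apply Finset.sum_le_sum
    intro a _
    by_cases h : pref a k = pre <;> simp [h]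
    rw [← halpha a]
    exact Finset.single_le_sum (fun a' _ => hθnn a a') (Finset.mem_univ pre)
  have hBC : ∑ pre : Fin k → A, (betaNS r θ' q k pre - C pre) = consFail r θ' q k := by
    have h1 : ∀ pre : Fin k → A, betaNS r θ' q k pre - C pre =
        ∑ a : Fin r → A, if pref a k = pre then 0 else θ' q k a pre := by
      intro pre
      rw [betaNS, hC, ← Finset.sum_sub_distrib]
      apply Finset.sum_congr rfl
      intro a _
      by_cases h : pref a k = pre <;> simp [h]
    rw [Finset.sum_congr rfl fun pre _ => h1 pre, Finset.sum_comm]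
    unfold consFail
    apply Finset.sum_congr rfl
    intro a _
    apply Finset.sum_congr rfl
    intro pre _
    simp only [consistentPrefix_iff hkr]
  have hmC : ∑ pre : Fin k → A, (mPre r θ' q k pre - C pre) = consFail r θ' q k := by
    have h1 : ∀ pre : Fin k → A, mPre r θ' q k pre - C pre =
        ∑ a : Fin r → A, if pref a k = pre then alphaNS r θ' q a - θ' q k a pre else 0 := by
      intro pre
      rw [mPre, hC, ← Finset.sum_sub_distrib]
      apply Finset.sum_congr rfl
      intro a _
      by_cases h : pref a k = pre <;> simp [h]
    rw [Finset.sum_congr rfl fun pre _ => h1 pre, Finset.sum_comm]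
    have h2 : ∀ a : Fin r → A,
        (∑ pre : Fin k → A, if pref a k = pre then alphaNS r θ' q a - θ' q k a pre else 0) =
        alphaNS r θ' q a - θ' q k a (pref a k) := by
      intro a
      rw [Finset.sum_ite_eq]
      simp
    rw [Finset.sum_congr rfl fun a _ => h2 a]
    unfold consFail
    apply Finset.sum_congr rfl
    intro a _
    have h3 : ∀ a' : Fin k → A,
        (if consistentPrefix r k a a' then 0 else θ' q k a a') =
        θ' q k a a' - (if pref a k = a' then θ' q k a a' else 0) := by
      intro a'
      simp only [consistentPrefix_iff hkr]
      by_cases h : pref a k = a' <;> simp [h]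
    rw [Finset.sum_congr rfl fun a' _ => h3 a', Finset.sum_sub_distrib, halpha a,
      Finset.sum_ite_eq]
    simp
  calc ∑ pre : Fin k → A, |betaNS r θ' q k pre - mPre r θ' q k pre|
      ≤ ∑ pre : Fin k → A,
          ((betaNS r θ' q k pre - C pre) + (mPre r θ' q k pre - C pre)) := by
        apply Finset.sum_le_sum
        intro pre _
        rw [abs_sub_le_iff]
        constructor <;> [skip; skip] <;> [linarith [hCB pre, hCm pre]; linarith [hCB pre, hCm pre]]
    _ = 2 * consFail r θ' q k := by
        rw [Finset.sum_add_distrib, hBC, hmC]; ring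


include hθ' in
lemma m_marginal (k : ℕ) (hkr : k < r) (pre : Fin k → A) :
    ∑ b : A, mPre r θ' q (k + 1) (Fin.snoc pre b) = mPre r θ' q k pre := by
  unfold mPre
  rw [Finset.sum_comm]
  apply Finset.sum_congr rfl
  intro a _
  simp only [pref_succ hkr a, snoc_eq_snoc_iff]
  by_cases hp : pref a k = pre
  · simp only [hp, true_and]
    rw [Finset.sum_ite_eq]
    simp
  · simp [hp]

set_option maxHeartbeats 1000000 in
include hθ' in
lemma close_gamma_m (k : ℕ) (hk1 : 1 ≤ k) (hkr : k < r) :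
    ∑ pre : Fin k → A,
      |(∑ b : A, betaNS r θ' q (k + 1) (Fin.snoc pre b)) - mPre r θ' q k pre| ≤
      2 * consFail r θ' q (k + 1) := by
  have h1 : ∀ pre : Fin k → A,
      |(∑ b : A, betaNS r θ' q (k + 1) (Fin.snoc pre b)) - mPre r θ' q k pre| ≤
      ∑ b : A, |betaNS r θ' q (k + 1) (Fin.snoc pre b) -
        mPre r θ' q (k + 1) (Fin.snoc pre b)| := by
    intro pre
    rw [← m_marginal r θ' hθ' q k hkr pre, ← Finset.sum_sub_distrib]
    exact Finset.abs_sum_le_sum_abs _ _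
  calc ∑ pre : Fin k → A,
        |(∑ b : A, betaNS r θ' q (k + 1) (Fin.snoc pre b)) - mPre r θ' q k pre|
      ≤ ∑ pre : Fin k → A, ∑ b : A, |betaNS r θ' q (k + 1) (Fin.snoc pre b) -
          mPre r θ' q (k + 1) (Fin.snoc pre b)| := Finset.sum_le_sum fun pre _ => h1 pre
    _ = ∑ p : Fin (k + 1) → A, |betaNS r θ' q (k + 1) p - mPre r θ' q (k + 1) p| :=
        (sum_snoc fun p => |betaNS r θ' q (k + 1) p - mPre r θ' q (k + 1) p|).symm
    _ ≤ 2 * consFail r θ' q (k + 1) :=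
        close_beta_m r θ' hθ' q (k + 1) (by omega) (by omega) (by omega)

lemma tail_sum (θc : (Fin r → Q) → (j : ℕ) → (Fin j → A) → A → ℝ)
    (hc : ∀ j, j + 1 ≤ r → ∀ pre : Fin j → A, (∑ a : A, θc q j pre a) = 1) :
    ∀ d m, m + d = r → ∀ g : (Fin m → A) → ℝ,
      (∑ a : Fin r → A, g (pref a m) *
        ∏ j ∈ Finset.Ico m r, (if h : j < r then θc q j (pref a j) (a ⟨j, h⟩) else 1)) =
      ∑ pre : Fin m → A, g pre := by
  intro d
  induction d with
  | zero =>
    intro m hm g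
    have hmr : m = r := by omega
    subst hmr
    rw [Finset.Ico_self]
    simp only [Finset.prod_empty, mul_one]
    exact Finset.sum_congr rfl fun a _ => by rw [pref_eq_self]
  | succ d ih =>
    intro m hm g
    have hmr : m < r := by omega
    set G : (Fin (m + 1) → A) → ℝ :=
      fun p => g (Fin.init p) * θc q m (Fin.init p) (p (Fin.last m)) with hG
    have h1 : ∀ a : Fin r → A,
        (g (pref a m) *
          ∏ j ∈ Finset.Ico m r, (if h : j < r then θc q j (pref a j) (a ⟨j, h⟩) else 1)) =
        G (pref a (m + 1)) *
          ∏ j ∈ Finset.Ico (m + 1) r,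
            (if h : j < r then θc q j (pref a j) (a ⟨j, h⟩) else 1) := by
      intro a
      rw [Finset.prod_eq_prod_Ico_succ_bot hmr, dif_pos hmr, hG]
      simp only [init_pref, pref_last hmr]
      ring
    rw [Finset.sum_congr rfl fun a _ => h1 a, ih (m + 1) (by omega) G, sum_snoc G]
    have h2 : ∀ pre : Fin m → A, ∀ b : A, G (Fin.snoc pre b) = g pre * θc q m pre b := by
      intro pre b
      rw [hG]
      simp only [Fin.init_snoc, Fin.snoc_last]
    calc ∑ pre : Fin m → A, ∑ b : A, G (Fin.snoc pre b)
        = ∑ pre : Fin m → A, ∑ b : A, g pre * θc q m pre b :=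
          Finset.sum_congr rfl fun pre _ => Finset.sum_congr rfl fun b _ => h2 pre b
      _ = ∑ pre : Fin m → A, g pre := by
          apply Finset.sum_congr rfl
          intro pre _
          rw [← Finset.mul_sum, hc m hmr pre, mul_one]

set_option maxHeartbeats 1000000 in
include hθ' in
lemma step_bound (θc : (Fin r → Q) → (j : ℕ) → (Fin j → A) → A → ℝ)
    (hθc : IsConditional r θ' θc) (k : ℕ) (hk1 : 1 ≤ k) (hkr : k < r) :
    ∑ a : Fin r → A, |hybridNS r θ' θc q k a - hybridNS r θ' θc q (k + 1) a| ≤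
      2 * consFail r θ' q k + 2 * consFail r θ' q (k + 1) := by
  obtain ⟨hc1, hc2⟩ := hθc
  have hpos := hθ'.1
  have hθcnn : ∀ j, j + 1 ≤ r → ∀ pre : Fin j → A, ∀ b, 0 ≤ θc q j pre b :=
    fun j hj pre => (hc1 q j hj pre).1
  have hBnn : ∀ kk, 1 ≤ kk → kk ≤ r → ∀ pre : Fin kk → A, 0 ≤ betaNS r θ' q kk pre :=
    fun kk h1 h2 pre => Finset.sum_nonneg fun a _ => hpos q kk h1 h2 a pre
  set T : (Fin r → A) → ℝ := fun a =>
    ∏ j ∈ Finset.Ico (k + 1) r, (if h : j < r then θc q j (pref a j) (a ⟨j, h⟩) else 1)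
    with hT
  have hTnn : ∀ a, 0 ≤ T a := by
    intro a
    rw [hT]
    apply Finset.prod_nonneg
    intro j hj
    by_cases h : j < r
    · rw [dif_pos h]
      exact hθcnn j h (pref a j) _
    · rw [dif_neg h]
      exact zero_le_one
  set D : (Fin (k + 1) → A) → ℝ := fun p =>
    |betaNS r θ' q k (Fin.init p) * θc q k (Fin.init p) (p (Fin.last k)) -
      betaNS r θ' q (k + 1) p| with hD
  have hpoint : ∀ a : Fin r → A,
      |hybridNS r θ' θc q k a - hybridNS r θ' θc q (k + 1) a| =
        D (pref a (k + 1)) * T a := by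
    intro a
    have e1 : hybridNS r θ' θc q k a =
        (betaNS r θ' q k (pref a k) * θc q k (pref a k) (a ⟨k, hkr⟩)) * T a := by
      rw [hybridNS, Finset.prod_eq_prod_Ico_succ_bot hkr, dif_pos hkr, hT]
      ring
    have e2 : hybridNS r θ' θc q (k + 1) a =
        betaNS r θ' q (k + 1) (pref a (k + 1)) * T a := by
      rw [hybridNS, hT]
    rw [e1, e2, ← sub_mul, abs_mul, abs_of_nonneg (hTnn a)]
    simp only [hD, init_pref, pref_last hkr]
  have hsum1 : (∑ a : Fin r → A, |hybridNS r θ' θc q k a - hybridNS r θ' θc q (k + 1) a|) =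
      ∑ p : Fin (k + 1) → A, D p := by
    rw [Finset.sum_congr rfl fun a _ => hpoint a]
    exact tail_sum r q θc (fun j hj pre => (hc1 q j hj pre).2) (r - (k + 1)) (k + 1)
      (by omega) D
  have hsum2 : (∑ p : Fin (k + 1) → A, D p) =
      ∑ pre : Fin k → A, ∑ b : A,
        |betaNS r θ' q k pre * θc q k pre b - betaNS r θ' q (k + 1) (Fin.snoc pre b)| := by
    rw [sum_snoc D]
    apply Finset.sum_congr rfl
    intro pre _
    apply Finset.sum_congr rfl
    intro b _
    simp only [hD, Fin.init_snoc, Fin.snoc_last]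
  have hkey : ∀ pre : Fin k → A,
      (∑ b : A,
        |betaNS r θ' q k pre * θc q k pre b - betaNS r θ' q (k + 1) (Fin.snoc pre b)|) ≤
      |betaNS r θ' q k pre - ∑ b : A, betaNS r θ' q (k + 1) (Fin.snoc pre b)| := by
    intro pre
    have hBsnn : ∀ b : A, 0 ≤ betaNS r θ' q (k + 1) (Fin.snoc pre b) :=
      fun b => hBnn (k + 1) (by omega) (by omega) _
    by_cases hγ : 0 < ∑ b : A, betaNS r θ' q (k + 1) (Fin.snoc pre b)
    · have heq : ∀ b : A,
          |betaNS r θ' q k pre * θc q k pre b - betaNS r θ' q (k + 1) (Fin.snoc pre b)| =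
          |betaNS r θ' q k pre - ∑ c : A, betaNS r θ' q (k + 1) (Fin.snoc pre c)| *
            (betaNS r θ' q (k + 1) (Fin.snoc pre b) /
              ∑ c : A, betaNS r θ' q (k + 1) (Fin.snoc pre c)) := by
        intro b
        rw [hc2 q k hkr pre hγ b]
        rw [show betaNS r θ' q k pre *
              (betaNS r θ' q (k + 1) (Fin.snoc pre b) /
                ∑ c : A, betaNS r θ' q (k + 1) (Fin.snoc pre c)) -
              betaNS r θ' q (k + 1) (Fin.snoc pre b) =
            (betaNS r θ' q k pre - ∑ c : A, betaNS r θ' q (k + 1) (Fin.snoc pre c)) *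
              (betaNS r θ' q (k + 1) (Fin.snoc pre b) /
                ∑ c : A, betaNS r θ' q (k + 1) (Fin.snoc pre c)) by
          field_simp]
        rw [abs_mul, abs_of_nonneg (div_nonneg (hBsnn b) hγ.le)]
      rw [Finset.sum_congr rfl fun b _ => heq b, ← Finset.mul_sum, ← Finset.sum_div,
        div_self hγ.ne', mul_one]
    · have h0 : (∑ b : A, betaNS r θ' q (k + 1) (Fin.snoc pre b)) = 0 :=
        le_antisymm (not_lt.1 hγ) (Finset.sum_nonneg fun b _ => hBsnn b)
      have hz : ∀ b : A, betaNS r θ' q (k + 1) (Fin.snoc pre b) = 0 := fun b =>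
        (Finset.sum_eq_zero_iff_of_nonneg fun b _ => hBsnn b).1 h0 b (Finset.mem_univ b)
      have hterm : ∀ b : A,
          |betaNS r θ' q k pre * θc q k pre b - betaNS r θ' q (k + 1) (Fin.snoc pre b)| =
          betaNS r θ' q k pre * θc q k pre b := by
        intro b
        rw [hz b, sub_zero,
          abs_of_nonneg (mul_nonneg (hBnn k hk1 hkr.le pre) (hθcnn k hkr pre b))]
      rw [h0, sub_zero, abs_of_nonneg (hBnn k hk1 hkr.le pre),
        Finset.sum_congr rfl fun b _ => hterm b, ← Finset.mul_sum, (hc1 q k hkr pre).2,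
        mul_one]
  calc ∑ a : Fin r → A, |hybridNS r θ' θc q k a - hybridNS r θ' θc q (k + 1) a|
      = ∑ pre : Fin k → A, ∑ b : A,
          |betaNS r θ' q k pre * θc q k pre b - betaNS r θ' q (k + 1) (Fin.snoc pre b)| := by
        rw [hsum1, hsum2]
    _ ≤ ∑ pre : Fin k → A,
          |betaNS r θ' q k pre - ∑ b : A, betaNS r θ' q (k + 1) (Fin.snoc pre b)| :=
        Finset.sum_le_sum fun pre _ => hkey pre
    _ ≤ ∑ pre : Fin k → A,
          (|betaNS r θ' q k pre - mPre r θ' q k pre| +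
            |(∑ b : A, betaNS r θ' q (k + 1) (Fin.snoc pre b)) - mPre r θ' q k pre|) := by
        apply Finset.sum_le_sum
        intro pre _
        rw [abs_sub_comm ((∑ b : A, betaNS r θ' q (k + 1) (Fin.snoc pre b)))
          (mPre r θ' q k pre)]
        exact abs_sub_le _ _ _
    _ ≤ 2 * consFail r θ' q k + 2 * consFail r θ' q (k + 1) := by
        rw [Finset.sum_add_distrib]
        have ha := close_beta_m r θ' hθ' q k hk1 hkr.le (by omega)
        have hb := close_gamma_m r θ' hθ' q k hk1 hkr
        linarith

end Main
end HybridAux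

/-- For a no-signaling strategy `θ'` of the oracularized game and the
associated hybrid distributions, for every `q`,
`SD(h^⟨1⟩_q, h^⟨r⟩_q) ≤ 2 Σ_{k=1}^r ε_cons(q,k) = 2r ε_cons(q)`,
where `ε_cons(q) = (1/r) Σ_{k=1}^r ε_cons(q,k)`. -/
theorem hybrid_statDiff_first_last
    {Q A : Type*} [Fintype Q] [Fintype A] [Nonempty Q] [Nonempty A]
    (r : ℕ) (hr : 1 ≤ r)
    (θ' : (Fin r → Q) → (k : ℕ) → (Fin r → A) → (Fin k → A) → ℝ)
    (hθ' : IsNoSignalingStrategy r θ')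
    (θc : (Fin r → Q) → (j : ℕ) → (Fin j → A) → A → ℝ)
    (hθc : IsConditional r θ' θc)
    (q : Fin r → Q) :
    statDiff (hybridNS r θ' θc q 1) (hybridNS r θ' θc q r) ≤
        2 * ∑ k ∈ Finset.Icc 1 r, consFail r θ' q k ∧
      2 * ∑ k ∈ Finset.Icc 1 r, consFail r θ' q k =
        2 * (r : ℝ) * ((1 / (r : ℝ)) * ∑ k ∈ Finset.Icc 1 r, consFail r θ' q k) := by
  have hεnn : ∀ k, 1 ≤ k → k ≤ r → 0 ≤ consFail r θ' q k := by
    intro k h1 h2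
    apply Finset.sum_nonneg
    intro a _
    apply Finset.sum_nonneg
    intro a' _
    by_cases h : consistentPrefix r k a a' <;> simp [h]
    exact hθ'.1 q k h1 h2 a a'
  constructor
  · have htel : ∀ a : Fin r → A,
        |hybridNS r θ' θc q 1 a - hybridNS r θ' θc q r a| ≤
          ∑ k ∈ Finset.Ico 1 r,
            |hybridNS r θ' θc q k a - hybridNS r θ' θc q (k + 1) a| := by
      intro a
      have h1 : (∑ k ∈ Finset.Ico 1 r,
            (hybridNS r θ' θc q (k + 1) a - hybridNS r θ' θc q k a)) =
          hybridNS r θ' θc q r a - hybridNS r θ' θc q 1 a := by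
        rw [Finset.sum_Ico_eq_sub _ hr,
          Finset.sum_range_sub (fun k => hybridNS r θ' θc q k a) r,
          Finset.sum_range_sub (fun k => hybridNS r θ' θc q k a) 1]
        ring
      calc |hybridNS r θ' θc q 1 a - hybridNS r θ' θc q r a|
          = |∑ k ∈ Finset.Ico 1 r,
              (hybridNS r θ' θc q (k + 1) a - hybridNS r θ' θc q k a)| := by
            rw [h1, abs_sub_comm]
        _ ≤ ∑ k ∈ Finset.Ico 1 r,
              |hybridNS r θ' θc q (k + 1) a - hybridNS r θ' θc q k a| :=
            Finset.abs_sum_le_sum_abs _ _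
        _ = ∑ k ∈ Finset.Ico 1 r,
              |hybridNS r θ' θc q k a - hybridNS r θ' θc q (k + 1) a| :=
            Finset.sum_congr rfl fun k _ => abs_sub_comm _ _
    have hmain : (∑ a : Fin r → A, |hybridNS r θ' θc q 1 a - hybridNS r θ' θc q r a|) ≤
        ∑ k ∈ Finset.Ico 1 r, (2 * consFail r θ' q k + 2 * consFail r θ' q (k + 1)) := by
      calc ∑ a : Fin r → A, |hybridNS r θ' θc q 1 a - hybridNS r θ' θc q r a|
          ≤ ∑ a : Fin r → A, ∑ k ∈ Finset.Ico 1 r,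
              |hybridNS r θ' θc q k a - hybridNS r θ' θc q (k + 1) a| :=
            Finset.sum_le_sum fun a _ => htel a
        _ = ∑ k ∈ Finset.Ico 1 r, ∑ a : Fin r → A,
              |hybridNS r θ' θc q k a - hybridNS r θ' θc q (k + 1) a| :=
            Finset.sum_comm
        _ ≤ ∑ k ∈ Finset.Ico 1 r,
              (2 * consFail r θ' q k + 2 * consFail r θ' q (k + 1)) := by
            apply Finset.sum_le_sum
            intro k hk
            rw [Finset.mem_Ico] at hk
            exact HybridAux.step_bound r θ' hθ' q θc hθc k hk.1 hk.2
    have hnn : ∀ i ∈ Finset.Icc 1 r, 0 ≤ consFail r θ' q i := by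
      intro i hi
      rw [Finset.mem_Icc] at hi
      exact hεnn i hi.1 hi.2
    have hsplit : (∑ k ∈ Finset.Ico 1 r,
          (2 * consFail r θ' q k + 2 * consFail r θ' q (k + 1))) ≤
        4 * ∑ k ∈ Finset.Icc 1 r, consFail r θ' q k := by
      rw [Finset.sum_add_distrib, ← Finset.mul_sum, ← Finset.mul_sum]
      have hA : (∑ k ∈ Finset.Ico 1 r, consFail r θ' q k) ≤
          ∑ k ∈ Finset.Icc 1 r, consFail r θ' q k :=
        Finset.sum_le_sum_of_subset_of_nonneg Finset.Ico_subset_Icc_self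
          fun i hi _ => hnn i hi
      have hre : (∑ k ∈ Finset.Ico 1 r, consFail r θ' q (k + 1)) =
          ∑ k ∈ Finset.Ico 2 (r + 1), consFail r θ' q k := by
        have := Finset.sum_Ico_add (fun k => consFail r θ' q k) 1 r 1
        simpa [add_comm] using this
      have hB : (∑ k ∈ Finset.Ico 2 (r + 1), consFail r θ' q k) ≤
          ∑ k ∈ Finset.Icc 1 r, consFail r θ' q k := by
        rw [Finset.Ico_add_one_right_eq_Icc]
        exact Finset.sum_le_sum_of_subset_of_nonneg
          (Finset.Icc_subset_Icc (by norm_num) le_rfl) fun i hi _ => hnn i hi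
      rw [hre]
      linarith
    rw [statDiff]
    linarith
  · have hr0 : (r : ℝ) ≠ 0 := Nat.cast_ne_zero.mpr (by omega)
    field_simp


end
end

section
/- Let H be a complex Hilbert space, A a finite nonempty set, and let {M_a}_{a∈A} and {N_a}_{a∈A} be POVMs on H (families of positive bounded operators with Σ_a M_a = I and Σ_a N_a = I) such that M_a N_b = N_b M_a for all a, b ∈ A. Let φ ∈ H be a unit vector. In the Hilbert space direct sum ⊕_{a∈A} H define ψ = (√(M_a) φ)_{a∈A} and ξ = (√(N_a) φ)_{a∈A}, where √ denotes the positive square root of a positive operator. Let p = 1 − Σ_{a∈A} ⟨φ, M_a N_a φ⟩. Then ψ and ξ are unit vectors, ⟨ψ, ξ⟩ = Σ_a ⟨√(M_a) φ, √(N_a) φ⟩ is a nonnegative real number, and 1 − ⟨ψ, ξ⟩² ≤ 2(1 − ⟨ψ, ξ⟩) ≤ 2p. In particular D(ψ, ξ)² ≤ 2p. -/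
open scoped ComplexInnerProductSpace

/-- `D(u, v) = √(1 − |⟨u, v⟩|²)` for families `(u_a)`, `(v_a)` of vectors, viewed as vectors of
the Hilbert space direct sum `⊕_a H` (whose inner product is `Σ_a ⟪u_a, v_a⟫`). -/
noncomputable def tdistFam {H : Type*} [NormedAddCommGroup H] [InnerProductSpace ℂ H]
    {S : Type*} [Fintype S] (u v : S → H) : ℝ :=
  Real.sqrt (1 - ‖∑ s, ⟪u s, v s⟫‖ ^ 2)

open scoped NNReal

section Aux

variable {H : Type*} [NormedAddCommGroup H] [InnerProductSpace ℂ H] [CompleteSpace H]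

private lemma isClosed_centralizer' (b : H →L[ℂ] H) :
    IsClosed ((StarSubalgebra.centralizer ℂ {b} : StarSubalgebra ℂ (H →L[ℂ] H)) :
      Set (H →L[ℂ] H)) := by
  rw [StarSubalgebra.coe_centralizer]
  have h : ((({b} : Set (H →L[ℂ] H)) ∪ star {b}) : Set (H →L[ℂ] H)).centralizer =
      ⋂ m ∈ ((({b} : Set (H →L[ℂ] H)) ∪ star {b}) : Set (H →L[ℂ] H)), {c | m * c = c * m} := by
    ext c
    simp [Set.mem_centralizer_iff]
  rw [h]
  exact isClosed_biInter fun m _ ↦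
    isClosed_eq (continuous_const.mul continuous_id) (continuous_id.mul continuous_const)

set_option maxHeartbeats 1000000 in
private lemma commute_sqrt' {a b : H →L[ℂ] H} (ha : 0 ≤ a) (h : Commute a b) :
    Commute (CFC.sqrt a) b := by
  have hsa : IsSelfAdjoint a := .of_nonneg ha
  have hnormal : IsStarNormal a := hsa.isStarNormal
  have hmem : CFC.sqrt a ∈ StarAlgebra.elemental ℂ a := by
    rw [CFC.sqrt_eq_cfc, cfc_nnreal_eq_real _ _ ha, cfc_real_eq_complex _ hsa,
      cfc_apply _ a hnormal (Continuous.continuousOn (by continuity)), cfcHom_eq_of_isStarNormal]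
    exact Subtype.coe_prop _
  have hmemc : a ∈ StarSubalgebra.centralizer ℂ ({b} : Set (H →L[ℂ] H)) := by
    rw [StarSubalgebra.mem_centralizer_iff]
    rintro g (rfl : g = b)
    refine ⟨h.symm.eq, ?_⟩
    have h2 := congrArg star h.eq
    simpa [star_mul, hsa.star_eq] using h2
  have hle := StarAlgebra.elemental.le_of_mem (isClosed_centralizer' b) hmemc
  have h3 := (StarSubalgebra.mem_centralizer_iff (R := ℂ)).mp (hle hmem) b rfl
  exact h3.1.symm

private lemma mul_nonneg_of_commute' {a b : H →L[ℂ] H} (ha : 0 ≤ a) (hb : 0 ≤ b)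
    (h : Commute a b) : 0 ≤ a * b := by
  have h1 : Commute (CFC.sqrt a) b := commute_sqrt' ha h
  have hs : IsSelfAdjoint (CFC.sqrt a) := .of_nonneg (CFC.sqrt_nonneg _)
  have h2 : a * b = star (CFC.sqrt a) * b * CFC.sqrt a := by
    rw [hs.star_eq]
    calc a * b = CFC.sqrt a * CFC.sqrt a * b := by rw [CFC.sqrt_mul_sqrt_self a ha]
    _ = CFC.sqrt a * (CFC.sqrt a * b) := mul_assoc _ _ _
    _ = CFC.sqrt a * (b * CFC.sqrt a) := by rw [h1.eq]
    _ = CFC.sqrt a * b * CFC.sqrt a := (mul_assoc _ _ _).symm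
  rw [h2]
  exact star_left_conjugate_nonneg hb _

private lemma inner_re_mono' {S T : H →L[ℂ] H} (h : S ≤ T) (φ : H) :
    (⟪φ, S φ⟫).re ≤ (⟪φ, T φ⟫).re := by
  have h1 := ((ContinuousLinearMap.nonneg_iff_isPositive (T - S)).mp
    (sub_nonneg.mpr h)).re_inner_nonneg_right φ
  simpa [ContinuousLinearMap.sub_apply, inner_sub_right, sub_nonneg] using h1

end Aux

set_option maxHeartbeats 1000000 in
set_option synthInstance.maxHeartbeats 200000 in
/-- Let `{M_a}` and `{N_a}` be mutually commuting POVMs on `H`, `φ` a unit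
vector, and `ψ = (√M_a φ)_a`, `ξ = (√N_a φ)_a` in `⊕_a H` (here `X a = √(M a)`, `Z a = √(N a)`
are the positive square roots).  With `p = 1 − Σ_a ⟨φ, M_a N_a φ⟩`, the vectors `ψ, ξ` are unit
vectors, `⟨ψ, ξ⟩ = Σ_a ⟨√M_a φ, √N_a φ⟩` is a nonnegative real, and
`1 − ⟨ψ,ξ⟩² ≤ 2(1 − ⟨ψ,ξ⟩) ≤ 2p`; in particular `D(ψ, ξ)² ≤ 2p`. -/
theorem sqrt_povm_closeness {H : Type*} [NormedAddCommGroup H] [InnerProductSpace ℂ H]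
    [CompleteSpace H] {A : Type*} [Fintype A] [Nonempty A]
    (M N : A → (H →L[ℂ] H))
    (hMpos : ∀ a, (M a).IsPositive) (hNpos : ∀ a, (N a).IsPositive)
    (hMsum : ∑ a, M a = 1) (hNsum : ∑ a, N a = 1)
    (hMN : ∀ a b, M a * N b = N b * M a)
    (X Z : A → (H →L[ℂ] H))
    (hX : ∀ a, (X a).IsPositive ∧ X a ^ 2 = M a)
    (hZ : ∀ a, (Z a).IsPositive ∧ Z a ^ 2 = N a)
    (φ : H) (hφ : ‖φ‖ = 1)
    (p : ℝ) (hp : p = 1 - (∑ a, ⟪φ, (M a * N a) φ⟫).re) :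
    (∑ a, ‖(X a) φ‖ ^ 2 = 1) ∧ (∑ a, ‖(Z a) φ‖ ^ 2 = 1) ∧
    (∑ a, ⟪(X a) φ, (Z a) φ⟫).im = 0 ∧ 0 ≤ (∑ a, ⟪(X a) φ, (Z a) φ⟫).re ∧
    1 - (∑ a, ⟪(X a) φ, (Z a) φ⟫).re ^ 2 ≤ 2 * (1 - (∑ a, ⟪(X a) φ, (Z a) φ⟫).re) ∧
    2 * (1 - (∑ a, ⟪(X a) φ, (Z a) φ⟫).re) ≤ 2 * p ∧
    tdistFam (fun a => (X a) φ) (fun a => (Z a) φ) ^ 2 ≤ 2 * p := by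
  classical
  -- nonnegativity in the Loewner order
  have hX0 : ∀ a, (0 : H →L[ℂ] H) ≤ X a :=
    fun a ↦ (ContinuousLinearMap.nonneg_iff_isPositive _).mpr (hX a).1
  have hZ0 : ∀ a, (0 : H →L[ℂ] H) ≤ Z a :=
    fun a ↦ (ContinuousLinearMap.nonneg_iff_isPositive _).mpr (hZ a).1
  have hM0 : ∀ a, (0 : H →L[ℂ] H) ≤ M a :=
    fun a ↦ (ContinuousLinearMap.nonneg_iff_isPositive _).mpr (hMpos a)
  have hN0 : ∀ a, (0 : H →L[ℂ] H) ≤ N a :=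
    fun a ↦ (ContinuousLinearMap.nonneg_iff_isPositive _).mpr (hNpos a)
  have hXsqrt : ∀ a, X a = CFC.sqrt (M a) := fun a ↦
    (CFC.sqrt_unique (by rw [← sq]; exact (hX a).2) (hX0 a)).symm
  have hZsqrt : ∀ a, Z a = CFC.sqrt (N a) := fun a ↦
    (CFC.sqrt_unique (by rw [← sq]; exact (hZ a).2) (hZ0 a)).symm
  -- X a commutes with Z a
  have hcomm : ∀ a, Commute (X a) (Z a) := by
    intro a
    have h1 : Commute (N a) (M a) := (hMN a a).symm
    have h2 : Commute (Z a) (M a) := by rw [hZsqrt a]; exact commute_sqrt' (hN0 a) h1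
    have h3 : Commute (X a) (Z a) := by rw [hXsqrt a]; exact commute_sqrt' (hM0 a) h2.symm
    exact h3
  set T : A → (H →L[ℂ] H) := fun a ↦ X a * Z a with hT
  have hT0 : ∀ a, (0 : H →L[ℂ] H) ≤ T a :=
    fun a ↦ mul_nonneg_of_commute' (hX0 a) (hZ0 a) (hcomm a)
  -- M a ≤ 1, hence norms are at most one
  have hMle1 : ∀ a, M a ≤ 1 := by
    intro a
    rw [← hMsum, ← Finset.sum_erase_add _ _ (Finset.mem_univ a)]
    exact le_add_of_nonneg_left (Finset.sum_nonneg fun b _ ↦ hM0 b)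
  have hNle1 : ∀ a, N a ≤ 1 := by
    intro a
    rw [← hNsum, ← Finset.sum_erase_add _ _ (Finset.mem_univ a)]
    exact le_add_of_nonneg_left (Finset.sum_nonneg fun b _ ↦ hN0 b)
  have hXnorm : ∀ a, ‖X a‖ ≤ 1 := by
    intro a
    have h1 : ‖M a‖ ≤ 1 := (CStarAlgebra.norm_le_one_iff_of_nonneg _ (hM0 a)).mpr (hMle1 a)
    have h2 : ‖X a‖ * ‖X a‖ = ‖M a‖ := by
      rw [← CStarRing.norm_star_mul_self, ((hX a).1.isSelfAdjoint).star_eq, ← sq, (hX a).2]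
    nlinarith [norm_nonneg (X a)]
  have hZnorm : ∀ a, ‖Z a‖ ≤ 1 := by
    intro a
    have h1 : ‖N a‖ ≤ 1 := (CStarAlgebra.norm_le_one_iff_of_nonneg _ (hN0 a)).mpr (hNle1 a)
    have h2 : ‖Z a‖ * ‖Z a‖ = ‖N a‖ := by
      rw [← CStarRing.norm_star_mul_self, ((hZ a).1.isSelfAdjoint).star_eq, ← sq, (hZ a).2]
    nlinarith [norm_nonneg (Z a)]
  have hTle1 : ∀ a, T a ≤ 1 := by
    intro a
    refine (CStarAlgebra.norm_le_one_iff_of_nonneg _ (hT0 a)).mp ?_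
    calc ‖T a‖ ≤ ‖X a‖ * ‖Z a‖ := norm_mul_le _ _
    _ ≤ 1 := by nlinarith [norm_nonneg (X a), norm_nonneg (Z a), hXnorm a, hZnorm a]
  -- T a * T a ≤ T a
  have hTsq : ∀ a, T a * T a ≤ T a := by
    intro a
    have hc : Commute (CFC.sqrt (T a)) (1 - T a) :=
      ((Commute.one_right _).sub_right (commute_sqrt' (hT0 a) (Commute.refl (T a))))
    have hs : IsSelfAdjoint (CFC.sqrt (T a)) := .of_nonneg (CFC.sqrt_nonneg _)
    have key : T a - T a * T a = star (CFC.sqrt (T a)) * (1 - T a) * CFC.sqrt (T a) := by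
      rw [hs.star_eq]
      refine Eq.symm ?_
      calc CFC.sqrt (T a) * (1 - T a) * CFC.sqrt (T a)
          = (1 - T a) * CFC.sqrt (T a) * CFC.sqrt (T a) := by rw [hc.eq]
        _ = (1 - T a) * (CFC.sqrt (T a) * CFC.sqrt (T a)) := mul_assoc _ _ _
        _ = (1 - T a) * T a := by rw [CFC.sqrt_mul_sqrt_self _ (hT0 a)]
        _ = T a - T a * T a := by rw [sub_mul, one_mul]
    have : (0 : H →L[ℂ] H) ≤ T a - T a * T a := by
      rw [key]
      exact star_left_conjugate_nonneg (sub_nonneg.mpr (hTle1 a)) _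
    exact sub_nonneg.mp this
  -- self-adjoint operators move across the inner product
  have hadj : ∀ (S : H →L[ℂ] H), S.IsPositive → ∀ x y : H, ⟪S x, y⟫ = ⟪x, S y⟫ := by
    intro S hS x y
    have h1 := ContinuousLinearMap.adjoint_inner_left S y x
    rwa [← ContinuousLinearMap.star_eq_adjoint, hS.isSelfAdjoint.star_eq] at h1
  have hinnerT : ∀ a, ⟪X a φ, Z a φ⟫ = ⟪φ, T a φ⟫ := by
    intro a
    calc ⟪X a φ, Z a φ⟫ = ⟪φ, X a (Z a φ)⟫ := hadj _ (hX a).1 _ _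
    _ = ⟪φ, T a φ⟫ := by rw [hT]; simp [ContinuousLinearMap.mul_apply]
  have hMNT : ∀ a, M a * N a = T a * T a := by
    intro a
    rw [← (hX a).2, ← (hZ a).2]
    simp only [hT, sq]
    exact (hcomm a).mul_mul_mul_comm (X a) (Z a)
  have hTsc : ∀ a, (⟪φ, (M a * N a) φ⟫).re ≤ (⟪X a φ, Z a φ⟫).re := by
    intro a
    rw [hinnerT a, hMNT a]
    exact inner_re_mono' (hTsq a) φ
  have hXφ : ∀ a, ‖X a φ‖ ^ 2 = (⟪φ, M a φ⟫).re := by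
    intro a
    have h1 : ⟪φ, M a φ⟫ = ⟪X a φ, X a φ⟫ := by
      rw [← (hX a).2]
      calc ⟪φ, (X a ^ 2) φ⟫ = ⟪φ, X a (X a φ)⟫ := by rw [sq]; simp [ContinuousLinearMap.mul_apply]
      _ = ⟪X a φ, X a φ⟫ := (hadj _ (hX a).1 _ _).symm
    rw [h1, inner_self_eq_norm_sq_to_K]
    simp [← Complex.ofReal_pow]
  have hZφ : ∀ a, ‖Z a φ‖ ^ 2 = (⟪φ, N a φ⟫).re := by
    intro a
    have h1 : ⟪φ, N a φ⟫ = ⟪Z a φ, Z a φ⟫ := by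
      rw [← (hZ a).2]
      calc ⟪φ, (Z a ^ 2) φ⟫ = ⟪φ, Z a (Z a φ)⟫ := by rw [sq]; simp [ContinuousLinearMap.mul_apply]
      _ = ⟪Z a φ, Z a φ⟫ := (hadj _ (hZ a).1 _ _).symm
    rw [h1, inner_self_eq_norm_sq_to_K]
    simp [← Complex.ofReal_pow]
  have hsum1 : ∑ a, ‖X a φ‖ ^ 2 = 1 := by
    calc ∑ a, ‖X a φ‖ ^ 2 = ∑ a, (⟪φ, M a φ⟫).re := by simp_rw [hXφ]
    _ = (⟪φ, (∑ a, M a) φ⟫).re := by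
        rw [ContinuousLinearMap.sum_apply, inner_sum]
        exact (Complex.re_sum _ _).symm
    _ = 1 := by
        rw [hMsum, ContinuousLinearMap.one_apply, inner_self_eq_norm_sq_to_K, hφ]
        norm_num
  have hsum2 : ∑ a, ‖Z a φ‖ ^ 2 = 1 := by
    calc ∑ a, ‖Z a φ‖ ^ 2 = ∑ a, (⟪φ, N a φ⟫).re := by simp_rw [hZφ]
    _ = (⟪φ, (∑ a, N a) φ⟫).re := by
        rw [ContinuousLinearMap.sum_apply, inner_sum]
        exact (Complex.re_sum _ _).symm
    _ = 1 := by
        rw [hNsum, ContinuousLinearMap.one_apply, inner_self_eq_norm_sq_to_K, hφ]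
        norm_num
  have hterm : ∀ a, (⟪X a φ, Z a φ⟫).im = 0 ∧ 0 ≤ (⟪X a φ, Z a φ⟫).re := by
    intro a
    constructor
    · have h1 : (starRingEnd ℂ) ⟪X a φ, Z a φ⟫ = ⟪X a φ, Z a φ⟫ := by
        calc (starRingEnd ℂ) ⟪X a φ, Z a φ⟫ = ⟪Z a φ, X a φ⟫ := inner_conj_symm _ _
        _ = ⟪φ, (Z a * X a) φ⟫ := by
            rw [ContinuousLinearMap.mul_apply]; exact hadj _ (hZ a).1 _ _
        _ = ⟪φ, T a φ⟫ := by rw [← (hcomm a).eq]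
        _ = ⟪X a φ, Z a φ⟫ := (hinnerT a).symm
      exact Complex.conj_eq_iff_im.mp h1
    · have h2 := ((ContinuousLinearMap.nonneg_iff_isPositive (T a)).mp (hT0 a)).re_inner_nonneg_right φ
      rw [hinnerT a]
      exact h2
  have himsum : (∑ a, ⟪X a φ, Z a φ⟫).im = 0 := by
    rw [Complex.im_sum]
    exact Finset.sum_eq_zero fun a _ ↦ (hterm a).1
  have hresum : 0 ≤ (∑ a, ⟪X a φ, Z a φ⟫).re := by
    rw [Complex.re_sum]
    exact Finset.sum_nonneg fun a _ ↦ (hterm a).2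
  have hre_le_one : (∑ a, ⟪X a φ, Z a φ⟫).re ≤ 1 := by
    rw [Complex.re_sum]
    have h5 : ∑ a, (⟪X a φ, Z a φ⟫).re ≤ ∑ a, (‖X a φ‖ ^ 2 + ‖Z a φ‖ ^ 2) / 2 := by
      refine Finset.sum_le_sum fun a _ ↦ ?_
      have h1 : (⟪X a φ, Z a φ⟫).re ≤ ‖⟪X a φ, Z a φ⟫‖ := Complex.re_le_norm _
      have h2 : ‖(⟪X a φ, Z a φ⟫ : ℂ)‖ ≤ ‖X a φ‖ * ‖Z a φ‖ := norm_inner_le_norm _ _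
      nlinarith [sq_nonneg (‖X a φ‖ - ‖Z a φ‖)]
    have h6 : ∑ a, (‖X a φ‖ ^ 2 + ‖Z a φ‖ ^ 2) / 2 = 1 := by
      rw [← Finset.sum_div, Finset.sum_add_distrib, hsum1, hsum2]
      norm_num
    linarith
  have hstep : 2 * (1 - (∑ a, ⟪X a φ, Z a φ⟫).re) ≤ 2 * p := by
    rw [hp]
    have h3 : (∑ a, ⟪φ, (M a * N a) φ⟫).re ≤ (∑ a, ⟪X a φ, Z a φ⟫).re := by
      rw [Complex.re_sum, Complex.re_sum]
      exact Finset.sum_le_sum fun a _ ↦ hTsc a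
    linarith
  have habs : ‖∑ a, ⟪X a φ, Z a φ⟫‖ ^ 2 = (∑ a, ⟪X a φ, Z a φ⟫).re ^ 2 := by
    rw [Complex.sq_norm, Complex.normSq_apply, himsum]
    ring
  have htd : tdistFam (fun a => (X a) φ) (fun a => (Z a) φ) ^ 2 ≤ 2 * p := by
    have h4 : (0:ℝ) ≤ 1 - ‖∑ a, ⟪X a φ, Z a φ⟫‖ ^ 2 := by
      rw [habs]; nlinarith
    calc tdistFam (fun a => (X a) φ) (fun a => (Z a) φ) ^ 2
        = 1 - ‖∑ a, ⟪X a φ, Z a φ⟫‖ ^ 2 := by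
          rw [tdistFam, Real.sq_sqrt h4]
      _ = 1 - (∑ a, ⟪X a φ, Z a φ⟫).re ^ 2 := by rw [habs]
      _ ≤ 2 * (1 - (∑ a, ⟪X a φ, Z a φ⟫).re) := by nlinarith
      _ ≤ 2 * p := hstep
  refine ⟨hsum1, hsum2, himsum, hresum, by nlinarith, hstep, htd⟩
end

section
/- Let H be a complex Hilbert space, Ψ ∈ H a unit vector, and A a finite nonempty set. Let {N^{a_1 a_2}}_{(a_1,a_2)∈A×A} be a PVM on H (pairwise orthogonal self-adjoint projections summing to the identity), and let P_1^{a_1} = Σ_{a_2} N^{a_1 a_2} and P_2^{a_2} = Σ_{a_1} N^{a_1 a_2} be its marginal projections. Let {X^a}_{a∈A} and {Y^a}_{a∈A} be families of positive bounded operators with Σ_a (X^a)² = I and Σ_a (Y^a)² = I, such that every X^a and every Y^a commutes with every N^{a_1 a_2}. Then D( (Y^{a_2} X^{a_1} Ψ)_{(a_1,a_2)}, (X^{a_1} Y^{a_2} Ψ)_{(a_1,a_2)} ) ≤ 2 [ D( (X^a Ψ)_{a}, (P_1^a Ψ)_{a} ) + D( (Y^a Ψ)_{a}, (P_2^a Ψ)_{a}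 ) ], where the first distance is taken in ⊕_{(a_1,a_2)∈A×A} H and the latter two in ⊕_{a∈A} H. -/
open scoped ComplexInnerProductSpace

section auxLemmas

variable {K : Type*} [NormedAddCommGroup K] [InnerProductSpace ℂ K]

private lemma inner_norm_lower (u v w : K) (hu : ‖u‖ = 1) (hv : ‖v‖ = 1) (hw : ‖w‖ = 1) :
    ‖⟪u, w⟫‖ * ‖⟪w, v⟫‖ - Real.sqrt (1 - ‖⟪u, w⟫‖ ^ 2) * Real.sqrt (1 - ‖⟪w, v⟫‖ ^ 2)
      ≤ ‖⟪u, v⟫‖ := by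
  set u' : K := u - ⟪w, u⟫ • w with hu'
  set v' : K := v - ⟪w, v⟫ • w with hv'
  have hww : (⟪w, w⟫ : ℂ) = 1 := by
    rw [inner_self_eq_norm_sq_to_K, hw]; norm_num
  have hcs : (starRingEnd ℂ) (⟪w, u⟫ : ℂ) = ⟪u, w⟫ := inner_conj_symm u w
  have hdec : (⟪u, v⟫ : ℂ) = ⟪u, w⟫ * ⟪w, v⟫ + ⟪u', v'⟫ := by
    simp only [hu', hv', inner_sub_left, inner_sub_right, inner_smul_left, inner_smul_right,
      hww, hcs]
    ring
  have norm_aux : ∀ x : K, ‖x‖ = 1 → ‖x - ⟪w, x⟫ • w‖ ^ 2 = 1 - ‖⟪x, w⟫‖ ^ 2 := by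
    intro x hx
    have h1 : (⟪x, ⟪w, x⟫ • w⟫ : ℂ) = (‖⟪w, x⟫‖ : ℂ) ^ 2 := by
      rw [inner_smul_right, ← inner_conj_symm x w, RCLike.mul_conj]
      norm_num [RCLike.norm_conj]
    have h2 := norm_sub_sq (𝕜 := ℂ) x (⟪w, x⟫ • w)
    rw [h1, norm_smul, hw, hx] at h2
    have h3 : ‖⟪x, w⟫‖ = ‖⟪w, x⟫‖ := by
      rw [← inner_conj_symm x w, RCLike.norm_conj]
    rw [h2, h3]
    have h4 : RCLike.re ((‖(⟪w, x⟫ : ℂ)‖ ^ 2 : ℝ) : ℂ) = ‖(⟪w, x⟫ : ℂ)‖ ^ 2 := by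
      simp [RCLike.re_to_complex, ← Complex.ofReal_pow]
    push_cast at h4 ⊢
    rw [h4]
    ring
  have hnu : ‖u'‖ ^ 2 = 1 - ‖⟪u, w⟫‖ ^ 2 := norm_aux u hu
  have hnv : ‖v'‖ ^ 2 = 1 - ‖⟪v, w⟫‖ ^ 2 := norm_aux v hv
  have hsu : Real.sqrt (1 - ‖⟪u, w⟫‖ ^ 2) = ‖u'‖ := by
    rw [← hnu, Real.sqrt_sq (norm_nonneg _)]
  have hsv : Real.sqrt (1 - ‖⟪w, v⟫‖ ^ 2) = ‖v'‖ := by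
    rw [show ‖(⟪w, v⟫ : ℂ)‖ = ‖(⟪v, w⟫ : ℂ)‖ by rw [← inner_conj_symm v w, RCLike.norm_conj],
      ← hnv, Real.sqrt_sq (norm_nonneg _)]
  calc ‖⟪u, w⟫‖ * ‖⟪w, v⟫‖ - Real.sqrt (1 - ‖⟪u, w⟫‖ ^ 2) * Real.sqrt (1 - ‖⟪w, v⟫‖ ^ 2)
      = ‖(⟪u, w⟫ : ℂ) * ⟪w, v⟫‖ - ‖u'‖ * ‖v'‖ := by rw [norm_mul, hsu, hsv]
    _ ≤ ‖(⟪u, w⟫ : ℂ) * ⟪w, v⟫‖ - ‖(⟪u', v'⟫ : ℂ)‖ := by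
        have h5 := norm_inner_le_norm (𝕜 := ℂ) u' v'
        linarith
    _ ≤ ‖(⟪u, w⟫ : ℂ) * ⟪w, v⟫ + ⟪u', v'⟫‖ := by
        have := norm_add_le ((⟪u, w⟫ : ℂ) * ⟪w, v⟫ + ⟪u', v'⟫) (-⟪u', v'⟫)
        simp only [add_neg_cancel_right, norm_neg] at this
        linarith
    _ = ‖⟪u, v⟫‖ := by rw [← hdec]

private lemma sqrt_one_sub_sq_triangle {a b c : ℝ} (ha0 : 0 ≤ a) (ha1 : a ≤ 1) (hb0 : 0 ≤ b)
    (hb1 : b ≤ 1) (hc0 : 0 ≤ c) (_hc1 : c ≤ 1)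
    (h : a * b - Real.sqrt (1 - a ^ 2) * Real.sqrt (1 - b ^ 2) ≤ c) :
    Real.sqrt (1 - c ^ 2) ≤ Real.sqrt (1 - a ^ 2) + Real.sqrt (1 - b ^ 2) := by
  set s := Real.sqrt (1 - a ^ 2) with hsdef
  set t := Real.sqrt (1 - b ^ 2) with htdef
  have hs0 : 0 ≤ s := Real.sqrt_nonneg _
  have ht0 : 0 ≤ t := Real.sqrt_nonneg _
  have hs : s ^ 2 = 1 - a ^ 2 := Real.sq_sqrt (by nlinarith)
  have ht : t ^ 2 = 1 - b ^ 2 := Real.sq_sqrt (by nlinarith)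
  have hsqc : Real.sqrt (1 - c ^ 2) ≤ 1 := by
    have h9 : Real.sqrt (1 - c ^ 2) ≤ Real.sqrt 1 := Real.sqrt_le_sqrt (by nlinarith)
    simpa using h9
  rcases le_or_gt (a * b) (s * t) with hab | hab
  · have h1 : a ^ 2 + b ^ 2 ≤ 1 := by
      nlinarith [mul_le_mul hab hab (mul_nonneg ha0 hb0) (mul_nonneg hs0 ht0)]
    have h2 : 1 ≤ s + t := by
      by_contra hlt
      push_neg at hlt
      have h3 : (s + t) ^ 2 < 1 := by
        have := pow_lt_one₀ (by positivity : (0:ℝ) ≤ s + t) hlt two_ne_zero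
        simpa using this
      nlinarith [mul_nonneg hs0 ht0]
    linarith
  · have hc' : a * b - s * t ≤ c := h
    have h0 : 0 ≤ a * b - s * t := by linarith
    have hkey : 1 - c ^ 2 ≤ (s * b + a * t) ^ 2 := by nlinarith
    calc Real.sqrt (1 - c ^ 2) ≤ Real.sqrt ((s * b + a * t) ^ 2) := Real.sqrt_le_sqrt hkey
      _ = s * b + a * t := Real.sqrt_sq (by positivity)
      _ ≤ s + t := by nlinarith

end auxLemmas

section famLemmas

variable {H : Type*} [NormedAddCommGroup H] [InnerProductSpace ℂ H]
  {S : Type*} [Fintype S]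

private lemma norm_one_of_sum_sq (u : S → H) (hu : ∑ s, ‖u s‖ ^ 2 = 1) :
    ‖(WithLp.equiv 2 (S → H)).symm u‖ = 1 := by
  have h := PiLp.norm_sq_eq_of_L2 (fun _ : S => H) ((WithLp.equiv 2 (S → H)).symm u)
  have h2 : ‖(WithLp.equiv 2 (S → H)).symm u‖ ^ 2 = 1 := by
    rw [h]; simpa using hu
  nlinarith [norm_nonneg ((WithLp.equiv 2 (S → H)).symm u)]

private lemma tdistFam_triangle (u v w : S → H) (hu : ∑ s, ‖u s‖ ^ 2 = 1)
    (hv : ∑ s, ‖v s‖ ^ 2 = 1) (hw : ∑ s, ‖w s‖ ^ 2 = 1) :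
    tdistFam u v ≤ tdistFam u w + tdistFam w v := by
  set U := (WithLp.equiv 2 (S → H)).symm u with hU
  set V := (WithLp.equiv 2 (S → H)).symm v with hV
  set W := (WithLp.equiv 2 (S → H)).symm w with hW
  have hnu : ‖U‖ = 1 := norm_one_of_sum_sq u hu
  have hnv : ‖V‖ = 1 := norm_one_of_sum_sq v hv
  have hnw : ‖W‖ = 1 := norm_one_of_sum_sq w hw
  have hiuv : (⟪U, V⟫ : ℂ) = ∑ s, ⟪u s, v s⟫ := PiLp.inner_apply U V
  have hiuw : (⟪U, W⟫ : ℂ) = ∑ s, ⟪u s, w s⟫ := PiLp.inner_apply U W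
  have hiwv : (⟪W, V⟫ : ℂ) = ∑ s, ⟪w s, v s⟫ := PiLp.inner_apply W V
  have key := sqrt_one_sub_sq_triangle (a := ‖(⟪U, W⟫ : ℂ)‖) (b := ‖(⟪W, V⟫ : ℂ)‖)
    (c := ‖(⟪U, V⟫ : ℂ)‖) (norm_nonneg _)
    (by simpa [hnu, hnw] using norm_inner_le_norm (𝕜 := ℂ) U W)
    (norm_nonneg _)
    (by simpa [hnw, hnv] using norm_inner_le_norm (𝕜 := ℂ) W V)
    (norm_nonneg _)
    (by simpa [hnu, hnv] using norm_inner_le_norm (𝕜 := ℂ) U V)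
    (inner_norm_lower U V W hnu hnv hnw)
  rw [hiuv, hiuw, hiwv] at key
  exact key

private lemma tdistFam_comm (u v : S → H) : tdistFam u v = tdistFam v u := by
  unfold tdistFam
  have : (∑ s, ⟪v s, u s⟫ : ℂ) = starRingEnd ℂ (∑ s, ⟪u s, v s⟫) := by
    rw [map_sum]
    exact Finset.sum_congr rfl fun s _ => (inner_conj_symm (v s) (u s)).symm
  rw [this, RCLike.norm_conj]

end famLemmas

section opLemmas

variable {H : Type*} [NormedAddCommGroup H] [InnerProductSpace ℂ H] [CompleteSpace H]

private lemma sa_inner {T : H →L[ℂ] H} (hT : IsSelfAdjoint T) (x y : H) :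
    (⟪T x, y⟫ : ℂ) = ⟪x, T y⟫ := by
  conv_lhs => rw [← ContinuousLinearMap.isSelfAdjoint_iff'.mp hT]
  exact ContinuousLinearMap.adjoint_inner_left T y x

private lemma sum_norm_sq_one (Ψ : H) (hΨ : ‖Ψ‖ = 1) {ι : Type*} [Fintype ι]
    (T : ι → H →L[ℂ] H)
    (h : ∑ i, ContinuousLinearMap.adjoint (T i) * T i = 1) :
    ∑ i, ‖T i Ψ‖ ^ 2 = 1 := by
  have key : ∀ i, (‖T i Ψ‖ ^ 2 : ℝ)
      = RCLike.re (⟪Ψ, (ContinuousLinearMap.adjoint (T i) * T i) Ψ⟫ : ℂ) := by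
    intro i
    rw [ContinuousLinearMap.mul_apply, ContinuousLinearMap.adjoint_inner_right]
    exact (inner_self_eq_norm_sq _).symm
  calc ∑ i, ‖T i Ψ‖ ^ 2
      = RCLike.re (∑ i, (⟪Ψ, (ContinuousLinearMap.adjoint (T i) * T i) Ψ⟫ : ℂ)) := by
        rw [map_sum]
        exact Finset.sum_congr rfl fun i _ => key i
    _ = RCLike.re ((⟪Ψ, (∑ i, ContinuousLinearMap.adjoint (T i) * T i) Ψ⟫ : ℂ)) := by
        rw [ContinuousLinearMap.sum_apply, inner_sum]
    _ = 1 := by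
        rw [h, ContinuousLinearMap.one_apply, inner_self_eq_norm_sq, hΨ]
        norm_num

private lemma collapse {ι : Type*} [Fintype ι] (C C' : H →L[ℂ] H) (Q : ι → H →L[ℂ] H)
    (h : ∑ i, Q i * Q i = 1) : ∑ i, (C * Q i) * (Q i * C') = C * C' := by
  have h1 : ∀ i, (C * Q i) * (Q i * C') = C * ((Q i * Q i) * C') := by
    intro i; simp only [mul_assoc]
  rw [Finset.sum_congr rfl fun i _ => h1 i, ← Finset.mul_sum, ← Finset.sum_mul, h, one_mul]

end opLemmas

/-- Let `{N^{a₁a₂}}` be a PVM on `H` with marginal projections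
`P₁^a = Σ_b N^{ab}` and `P₂^a = Σ_b N^{ba}`, and let `{X^a}`, `{Y^a}` be families of positive
operators with `Σ (X^a)² = Σ (Y^a)² = 1`, each commuting with every `N^{a₁a₂}`.  Then
`D((Y^{a₂} X^{a₁} Ψ), (X^{a₁} Y^{a₂} Ψ)) ≤ 2 [D((X^a Ψ), (P₁^a Ψ)) + D((Y^a Ψ), (P₂^a Ψ))]`. -/
theorem almost_commuting_of_close_to_pvm {H : Type*} [NormedAddCommGroup H]
    [InnerProductSpace ℂ H] [CompleteSpace H] {A : Type*} [Fintype A] [Nonempty A]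
    (Ψ : H) (hΨ : ‖Ψ‖ = 1)
    (N : A → A → (H →L[ℂ] H))
    (hNsa : ∀ a₁ a₂, IsSelfAdjoint (N a₁ a₂))
    (hNproj : ∀ a₁ a₂, N a₁ a₂ * N a₁ a₂ = N a₁ a₂)
    (hNorth : ∀ a₁ a₂ b₁ b₂, (a₁, a₂) ≠ (b₁, b₂) → N a₁ a₂ * N b₁ b₂ = 0)
    (hNsum : ∑ a₁, ∑ a₂, N a₁ a₂ = 1)
    (X Y : A → (H →L[ℂ] H))
    (hXpos : ∀ a, (X a).IsPositive) (hYpos : ∀ a, (Y a).IsPositive)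
    (hXsum : ∑ a, X a ^ 2 = 1) (hYsum : ∑ a, Y a ^ 2 = 1)
    (hXN : ∀ a a₁ a₂, X a * N a₁ a₂ = N a₁ a₂ * X a)
    (hYN : ∀ a a₁ a₂, Y a * N a₁ a₂ = N a₁ a₂ * Y a) :
    tdistFam (fun p : A × A => (Y p.2) ((X p.1) Ψ)) (fun p : A × A => (X p.1) ((Y p.2) Ψ))
      ≤ 2 * (tdistFam (fun a => (X a) Ψ) (fun a => (∑ b, N a b) Ψ) +
             tdistFam (fun a => (Y a) Ψ) (fun a => (∑ b, N b a) Ψ)) := by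
  -- self-adjointness facts
  have hXsa : ∀ a, IsSelfAdjoint (X a) := fun a => (hXpos a).isSelfAdjoint
  have hYsa : ∀ a, IsSelfAdjoint (Y a) := fun a => (hYpos a).isSelfAdjoint
  have hXsum' : ∑ a, X a * X a = 1 := by simpa [sq] using hXsum
  have hYsum' : ∑ a, Y a * Y a = 1 := by simpa [sq] using hYsum
  -- marginal projections
  have hP1sa : ∀ a, IsSelfAdjoint (∑ b, N a b) := by
    intro a
    show star (∑ b, N a b) = ∑ b, N a b
    rw [star_sum]
    exact Finset.sum_congr rfl fun b _ => hNsa a b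
  have hP2sa : ∀ a, IsSelfAdjoint (∑ b, N b a) := by
    intro a
    show star (∑ b, N b a) = ∑ b, N b a
    rw [star_sum]
    exact Finset.sum_congr rfl fun b _ => hNsa b a
  have hP1N : ∀ a b, (∑ c, N a c) * N a b = N a b := by
    intro a b
    rw [Finset.sum_mul]
    rw [Finset.sum_eq_single b (fun c _ hc => hNorth a c a b (by simp [hc])) (by simp)]
    exact hNproj a b
  have hNP2 : ∀ a b, N a b * (∑ c, N c b) = N a b := by
    intro a b
    rw [Finset.mul_sum]
    rw [Finset.sum_eq_single a (fun c _ hc => hNorth a b c b (by simp [Ne.symm hc])) (by simp)]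
    exact hNproj a b
  have hP1proj : ∀ a, (∑ b, N a b) * (∑ b, N a b) = ∑ b, N a b := by
    intro a
    rw [Finset.mul_sum]
    exact Finset.sum_congr rfl fun b _ => hP1N a b
  have hP2proj : ∀ b, (∑ a, N a b) * (∑ a, N a b) = ∑ a, N a b := by
    intro b
    rw [Finset.sum_mul]
    exact Finset.sum_congr rfl fun a _ => hNP2 a b
  have hP1sum : ∑ a, ∑ b, N a b = 1 := hNsum
  have hP2sum : ∑ b, ∑ a, N a b = 1 := by rw [Finset.sum_comm]; exact hNsum
  have hYP1 : ∀ b a, Y b * (∑ c, N a c) = (∑ c, N a c) * Y b := by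
    intro b a
    rw [Finset.mul_sum, Finset.sum_mul]
    exact Finset.sum_congr rfl fun c _ => hYN b a c
  have hXP2 : ∀ a b, X a * (∑ c, N c b) = (∑ c, N c b) * X a := by
    intro a b
    rw [Finset.mul_sum, Finset.sum_mul]
    exact Finset.sum_congr rfl fun c _ => hXN a c b
  -- adjoint computations
  have hadj : ∀ (T U : H →L[ℂ] H), IsSelfAdjoint T → IsSelfAdjoint U →
      ContinuousLinearMap.adjoint (T * U) = U * T := by
    intro T U hT hU
    rw [← ContinuousLinearMap.star_eq_adjoint, star_mul, hT.star_eq, hU.star_eq]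
  -- norm-one conditions for the five families
  have hnorm_u : ∑ p : A × A, ‖(Y p.2) ((X p.1) Ψ)‖ ^ 2 = 1 := by
    have h := sum_norm_sq_one Ψ hΨ (fun p : A × A => Y p.2 * X p.1) (by
      rw [Fintype.sum_prod_type]
      have : ∀ a, (∑ b, ContinuousLinearMap.adjoint (Y b * X a) * (Y b * X a))
          = X a * X a := by
        intro a
        calc ∑ b, ContinuousLinearMap.adjoint (Y b * X a) * (Y b * X a)
            = ∑ b, (X a * Y b) * (Y b * X a) := by
              exact Finset.sum_congr rfl fun b _ => by rw [hadj _ _ (hYsa b) (hXsa a)]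
          _ = X a * X a := collapse (X a) (X a) Y hYsum'
      rw [Finset.sum_congr rfl fun a _ => this a]
      exact hXsum')
    simpa [ContinuousLinearMap.mul_apply] using h
  have hnorm_v : ∑ p : A × A, ‖(X p.1) ((Y p.2) Ψ)‖ ^ 2 = 1 := by
    have h := sum_norm_sq_one Ψ hΨ (fun p : A × A => X p.1 * Y p.2) (by
      rw [Fintype.sum_prod_type_right]
      have : ∀ b, (∑ a, ContinuousLinearMap.adjoint (X a * Y b) * (X a * Y b))
          = Y b * Y b := by
        intro b
        calc ∑ a, ContinuousLinearMap.adjoint (X a * Y b) * (X a * Y b)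
            = ∑ a, (Y b * X a) * (X a * Y b) := by
              exact Finset.sum_congr rfl fun a _ => by rw [hadj _ _ (hXsa a) (hYsa b)]
          _ = Y b * Y b := collapse (Y b) (Y b) X hXsum'
      rw [Finset.sum_congr rfl fun b _ => this b]
      exact hYsum')
    simpa [ContinuousLinearMap.mul_apply] using h
  have hnorm_w1 : ∑ p : A × A, ‖(Y p.2) ((∑ b, N p.1 b) Ψ)‖ ^ 2 = 1 := by
    have h := sum_norm_sq_one Ψ hΨ (fun p : A × A => Y p.2 * (∑ b, N p.1 b)) (by
      rw [Fintype.sum_prod_type]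
      have : ∀ a, (∑ b, ContinuousLinearMap.adjoint (Y b * (∑ c, N a c))
            * (Y b * (∑ c, N a c))) = ∑ c, N a c := by
        intro a
        calc ∑ b, ContinuousLinearMap.adjoint (Y b * (∑ c, N a c)) * (Y b * (∑ c, N a c))
            = ∑ b, ((∑ c, N a c) * Y b) * (Y b * (∑ c, N a c)) := by
              exact Finset.sum_congr rfl fun b _ => by rw [hadj _ _ (hYsa b) (hP1sa a)]
          _ = (∑ c, N a c) * (∑ c, N a c) := collapse _ _ Y hYsum'
          _ = ∑ c, N a c := hP1proj a
      rw [Finset.sum_congr rfl fun a _ => this a]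
      exact hP1sum)
    simpa [ContinuousLinearMap.mul_apply] using h
  have hnorm_m : ∑ p : A × A, ‖(N p.1 p.2) Ψ‖ ^ 2 = 1 := by
    have h := sum_norm_sq_one Ψ hΨ (fun p : A × A => N p.1 p.2) (by
      rw [Fintype.sum_prod_type]
      calc ∑ a, ∑ b, ContinuousLinearMap.adjoint (N a b) * N a b
          = ∑ a, ∑ b, N a b := by
            refine Finset.sum_congr rfl fun a _ => Finset.sum_congr rfl fun b _ => ?_
            rw [← ContinuousLinearMap.star_eq_adjoint, (hNsa a b).star_eq, hNproj a b]
        _ = 1 := hNsum)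
    simpa using h
  have hnorm_w2 : ∑ p : A × A, ‖(X p.1) ((∑ c, N c p.2) Ψ)‖ ^ 2 = 1 := by
    have h := sum_norm_sq_one Ψ hΨ (fun p : A × A => X p.1 * (∑ c, N c p.2)) (by
      rw [Fintype.sum_prod_type_right]
      have : ∀ b, (∑ a, ContinuousLinearMap.adjoint (X a * (∑ c, N c b))
            * (X a * (∑ c, N c b))) = ∑ c, N c b := by
        intro b
        calc ∑ a, ContinuousLinearMap.adjoint (X a * (∑ c, N c b)) * (X a * (∑ c, N c b))
            = ∑ a, ((∑ c, N c b) * X a) * (X a * (∑ c, N c b)) := by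
              exact Finset.sum_congr rfl fun a _ => by rw [hadj _ _ (hXsa a) (hP2sa b)]
          _ = (∑ c, N c b) * (∑ c, N c b) := collapse _ _ X hXsum'
          _ = ∑ c, N c b := hP2proj b
      rw [Finset.sum_congr rfl fun b _ => this b]
      exact hP2sum)
    simpa [ContinuousLinearMap.mul_apply] using h
  -- the inner product identities
  have E1 : (∑ p : A × A, (⟪(Y p.2) ((X p.1) Ψ), (Y p.2) ((∑ b, N p.1 b) Ψ)⟫ : ℂ))
      = ∑ a, (⟪(X a) Ψ, (∑ b, N a b) Ψ⟫ : ℂ) := by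
    rw [Fintype.sum_prod_type]
    refine Finset.sum_congr rfl fun a _ => ?_
    calc ∑ b, (⟪(Y b) ((X a) Ψ), (Y b) ((∑ c, N a c) Ψ)⟫ : ℂ)
        = ∑ b, (⟪(X a) Ψ, (Y b * Y b) ((∑ c, N a c) Ψ)⟫ : ℂ) := by
          refine Finset.sum_congr rfl fun b _ => ?_
          rw [sa_inner (hYsa b), ← ContinuousLinearMap.mul_apply]
      _ = (⟪(X a) Ψ, (∑ b, Y b * Y b) ((∑ c, N a c) Ψ)⟫ : ℂ) := by
          rw [ContinuousLinearMap.sum_apply Finset.univ (fun b => Y b * Y b), inner_sum]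
      _ = ⟪(X a) Ψ, (∑ c, N a c) Ψ⟫ := by rw [hYsum', ContinuousLinearMap.one_apply]
  have E2 : (∑ p : A × A, (⟪(Y p.2) ((∑ b, N p.1 b) Ψ), (N p.1 p.2) Ψ⟫ : ℂ))
      = ∑ b, (⟪(Y b) Ψ, (∑ c, N c b) Ψ⟫ : ℂ) := by
    rw [Fintype.sum_prod_type_right]
    refine Finset.sum_congr rfl fun b _ => ?_
    have step : ∀ a, (⟪(Y b) ((∑ c, N a c) Ψ), (N a b) Ψ⟫ : ℂ) = ⟪(Y b) Ψ, (N a b) Ψ⟫ := by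
      intro a
      have hop : (∑ c, N a c) * (Y b * N a b) = Y b * N a b := by
        rw [← mul_assoc, ← hYP1 b a, mul_assoc, hP1N a b]
      calc (⟪(Y b) ((∑ c, N a c) Ψ), (N a b) Ψ⟫ : ℂ)
          = ⟪(∑ c, N a c) Ψ, (Y b) ((N a b) Ψ)⟫ := sa_inner (hYsa b) _ _
        _ = ⟪Ψ, (∑ c, N a c) ((Y b) ((N a b) Ψ))⟫ := sa_inner (hP1sa a) _ _
        _ = ⟪Ψ, ((∑ c, N a c) * (Y b * N a b)) Ψ⟫ := by
            simp only [ContinuousLinearMap.mul_apply]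
        _ = ⟪Ψ, (Y b * N a b) Ψ⟫ := by rw [hop]
        _ = ⟪Ψ, (Y b) ((N a b) Ψ)⟫ := by simp only [ContinuousLinearMap.mul_apply]
        _ = ⟪(Y b) Ψ, (N a b) Ψ⟫ := (sa_inner (hYsa b) _ _).symm
    calc ∑ a, (⟪(Y b) ((∑ c, N a c) Ψ), (N a b) Ψ⟫ : ℂ)
        = ∑ a, (⟪(Y b) Ψ, (N a b) Ψ⟫ : ℂ) := Finset.sum_congr rfl fun a _ => step a
      _ = ⟪(Y b) Ψ, (∑ c, N c b) Ψ⟫ := by rw [ContinuousLinearMap.sum_apply, inner_sum]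
  have E3 : (∑ p : A × A, (⟪(N p.1 p.2) Ψ, (X p.1) ((∑ c, N c p.2) Ψ)⟫ : ℂ))
      = ∑ a, (⟪(X a) Ψ, (∑ b, N a b) Ψ⟫ : ℂ) := by
    rw [Fintype.sum_prod_type]
    refine Finset.sum_congr rfl fun a _ => ?_
    have step : ∀ b, (⟪(N a b) Ψ, (X a) ((∑ c, N c b) Ψ)⟫ : ℂ) = ⟪(X a) Ψ, (N a b) Ψ⟫ := by
      intro b
      have hop : N a b * (X a * (∑ c, N c b)) = X a * N a b := by
        rw [← mul_assoc, ← hXN a a b, mul_assoc, hNP2 a b]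
      calc (⟪(N a b) Ψ, (X a) ((∑ c, N c b) Ψ)⟫ : ℂ)
          = ⟪Ψ, (N a b) ((X a) ((∑ c, N c b) Ψ))⟫ := sa_inner (hNsa a b) _ _
        _ = ⟪Ψ, (N a b * (X a * (∑ c, N c b))) Ψ⟫ := by
            simp only [ContinuousLinearMap.mul_apply]
        _ = ⟪Ψ, (X a * N a b) Ψ⟫ := by rw [hop]
        _ = ⟪Ψ, (X a) ((N a b) Ψ)⟫ := by simp only [ContinuousLinearMap.mul_apply]
        _ = ⟪(X a) Ψ, (N a b) Ψ⟫ := (sa_inner (hXsa a) _ _).symm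
    calc ∑ b, (⟪(N a b) Ψ, (X a) ((∑ c, N c b) Ψ)⟫ : ℂ)
        = ∑ b, (⟪(X a) Ψ, (N a b) Ψ⟫ : ℂ) := Finset.sum_congr rfl fun b _ => step b
      _ = ⟪(X a) Ψ, (∑ b, N a b) Ψ⟫ := by rw [ContinuousLinearMap.sum_apply, inner_sum]
  have E4 : (∑ p : A × A, (⟪(X p.1) ((∑ c, N c p.2) Ψ), (X p.1) ((Y p.2) Ψ)⟫ : ℂ))
      = ∑ b, (⟪(∑ c, N c b) Ψ, (Y b) Ψ⟫ : ℂ) := by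
    rw [Fintype.sum_prod_type_right]
    refine Finset.sum_congr rfl fun b _ => ?_
    calc ∑ a, (⟪(X a) ((∑ c, N c b) Ψ), (X a) ((Y b) Ψ)⟫ : ℂ)
        = ∑ a, (⟪(∑ c, N c b) Ψ, (X a * X a) ((Y b) Ψ)⟫ : ℂ) := by
          refine Finset.sum_congr rfl fun a _ => ?_
          rw [sa_inner (hXsa a), ← ContinuousLinearMap.mul_apply]
      _ = (⟪(∑ c, N c b) Ψ, (∑ a, X a * X a) ((Y b) Ψ)⟫ : ℂ) := by
          rw [ContinuousLinearMap.sum_apply Finset.univ (fun a => X a * X a), inner_sum]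
      _ = ⟪(∑ c, N c b) Ψ, (Y b) Ψ⟫ := by rw [hXsum', ContinuousLinearMap.one_apply]
  -- triangle chain
  have T1 := tdistFam_triangle (fun p : A × A => (Y p.2) ((X p.1) Ψ))
    (fun p : A × A => (X p.1) ((Y p.2) Ψ)) (fun p : A × A => (Y p.2) ((∑ b, N p.1 b) Ψ))
    hnorm_u hnorm_v hnorm_w1
  have T2 := tdistFam_triangle (fun p : A × A => (Y p.2) ((∑ b, N p.1 b) Ψ))
    (fun p : A × A => (X p.1) ((Y p.2) Ψ)) (fun p : A × A => (N p.1 p.2) Ψ)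
    hnorm_w1 hnorm_v hnorm_m
  have T3 := tdistFam_triangle (fun p : A × A => (N p.1 p.2) Ψ)
    (fun p : A × A => (X p.1) ((Y p.2) Ψ)) (fun p : A × A => (X p.1) ((∑ c, N c p.2) Ψ))
    hnorm_m hnorm_v hnorm_w2
  have d1 : tdistFam (fun p : A × A => (Y p.2) ((X p.1) Ψ))
      (fun p : A × A => (Y p.2) ((∑ b, N p.1 b) Ψ))
      = tdistFam (fun a => (X a) Ψ) (fun a => (∑ b, N a b) Ψ) := by
    unfold tdistFam
    rw [E1]
  have d2 : tdistFam (fun p : A × A => (Y p.2) ((∑ b, N p.1 b) Ψ))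
      (fun p : A × A => (N p.1 p.2) Ψ)
      = tdistFam (fun a => (Y a) Ψ) (fun a => (∑ b, N b a) Ψ) := by
    unfold tdistFam
    rw [E2]
  have d3 : tdistFam (fun p : A × A => (N p.1 p.2) Ψ)
      (fun p : A × A => (X p.1) ((∑ c, N c p.2) Ψ))
      = tdistFam (fun a => (X a) Ψ) (fun a => (∑ b, N a b) Ψ) := by
    unfold tdistFam
    rw [E3]
  have d4 : tdistFam (fun p : A × A => (X p.1) ((∑ c, N c p.2) Ψ))
      (fun p : A × A => (X p.1) ((Y p.2) Ψ))
      = tdistFam (fun a => (Y a) Ψ) (fun a => (∑ b, N b a) Ψ) := by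
    rw [tdistFam_comm (fun a => (Y a) Ψ) (fun a => (∑ b, N b a) Ψ)]
    unfold tdistFam
    rw [E4]
  rw [d1] at T1
  rw [d2] at T2
  rw [d3, d4] at T3
  linarith
end
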